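/- arXiv:2409.04866 — 2 statements merged into one kernel-verified Lean document; each statement's English description precedes it below -/
import Mathlib

section
/- For every 0<r<∞ there exist constants C_r and T_r such that for every quasi-Banach lattice L and every finite family (f_j)_{j∈J} in L, the lattice-order inequalities (1/C_r)·Ave_{ε_j=±1}(Σ_{j∈J} ε_j f_j ; r) ≤ (Σ_{j∈J} |f_j|²)^{1/2} ≤ T_r·Ave_{ε_j=±1}(Σ_{j∈J} ε_j f_j ; r) hold, where Ave_{ε_j=±1}(Σ_j ε_j f_j ; r) = (2^{−|J|} Σ_{ε∈{−1,1}^J} |Σ_{j∈J} ε_j f_j|^r)^{1/r} ∈ L. -/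
/-!
Statement 2: Lattice-valued Khintchine inequalities. For every `0 < r < ∞` there are constants
`C_r`, `T_r` such that for every quasi-Banach lattice `L` and every finite family `(f_j)_{j∈J}`
in `L`, the lattice-order inequalities
`(1/C_r) · Ave_{ε_j=±1}(∑_j ε_j f_j ; r) ≤ (∑_j |f_j|²)^{1/2} ≤ T_r · Ave_{ε_j=±1}(∑_j ε_j f_j ; r)`
hold, where `Ave(∑ ε_j f_j ; r) = (2^{-|J|} ∑_{ε∈{-1,1}^J} |∑_j ε_j f_j|^r)^{1/r}` is computed
via the lattice functional calculus.

We model quasi-Banach lattices as Köthe-type function lattices (solid linear subspaces of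
`Ω → ℝ` with the pointwise order, carrying a complete monotone quasi-norm), so the lattice
functional calculus is computed pointwise and the lattice order is the pointwise order.
-/

noncomputable section
open Filter Topology

structure IsQBLattice {Ω : Type*} (mem : (Ω → ℝ) → Prop) (q : (Ω → ℝ) → ℝ) : Prop where
  zero_mem : mem 0
  add_mem : ∀ ⦃f g⦄, mem f → mem g → mem (f + g)
  smul_mem : ∀ (c : ℝ) ⦃f⦄, mem f → mem (c • f)
  solid : ∀ ⦃f g : Ω → ℝ⦄, mem g → (∀ ω, |f ω| ≤ |g ω|) → mem f
  q_nonneg : ∀ f, 0 ≤ q f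
  q_pos : ∀ ⦃f⦄, mem f → f ≠ 0 → 0 < q f
  q_smul : ∀ (c : ℝ) (f : Ω → ℝ), q (c • f) = |c| * q f
  q_mono : ∀ ⦃f g⦄, mem f → mem g → (∀ ω, |f ω| ≤ |g ω|) → q f ≤ q g
  quasi_triangle : ∃ C : ℝ, 1 ≤ C ∧ ∀ ⦃f g⦄, mem f → mem g → q (f + g) ≤ C * (q f + q g)
  complete : ∀ F : ℕ → Ω → ℝ, (∀ n, mem (F n)) →
    (∀ ε : ℝ, 0 < ε → ∃ N, ∀ m ≥ N, ∀ n ≥ N, q (F m - F n) < ε) →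
    ∃ g, mem g ∧ Tendsto (fun n => q (F n - g)) atTop (nhds 0)

/-- The sign `±1` associated with a Boolean. -/
def signOf (b : Bool) : ℝ := if b then 1 else -1

/-- The lattice-valued `r`-average
`Ave_{ε_j=±1}(∑_j ε_j f_j ; r) = (2^{-n} ∑_{ε∈{-1,1}^n} |∑_j ε_j f_j|^r)^{1/r}`,
computed pointwise via the lattice functional calculus. -/
def radAve {Ω : Type*} (r : ℝ) {n : ℕ} (f : Fin n → Ω → ℝ) : Ω → ℝ :=
  fun ω => ((2 ^ n : ℝ)⁻¹ * ∑ θ : Fin n → Bool, |∑ j, signOf (θ j) * f j ω| ^ r) ^ (1 / r)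

/-- The lattice element `(∑_j |f_j|²)^{1/2}`, computed pointwise. -/
def vTwo {Ω : Type*} {n : ℕ} (f : Fin n → Ω → ℝ) : Ω → ℝ :=
  fun ω => (∑ j, |f j ω| ^ (2 : ℝ)) ^ (1 / (2 : ℝ))

namespace Kh

open Finset Nat

def Ssum {n : ℕ} (a : Fin n → ℝ) (θ : Fin n → Bool) : ℝ := ∑ j, signOf (θ j) * a j

lemma Ssum_cons {n : ℕ} (a : Fin (n+1) → ℝ) (b : Bool) (τ : Fin n → Bool) :
    Ssum a (Fin.cons b τ) = signOf b * a 0 + Ssum (a ∘ Fin.succ) τ := by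
  simp [Ssum, Fin.sum_univ_succ]

lemma sum_pair {n : ℕ} (a : Fin (n+1) → ℝ) (g : ℝ → ℝ) :
    ∑ θ : Fin (n+1) → Bool, g (Ssum a θ)
      = ∑ τ : Fin n → Bool,
          (g (Ssum (a ∘ Fin.succ) τ + a 0) + g (Ssum (a ∘ Fin.succ) τ - a 0)) := by
  rw [← Equiv.sum_comp (Fin.consEquiv (fun _ : Fin (n+1) => Bool)) (fun θ => g (Ssum a θ)),
    Fintype.sum_prod_type_right]
  refine Finset.sum_congr rfl fun τ _ => ?_
  rw [Fintype.sum_bool]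
  simp only [Fin.consEquiv, Equiv.coe_fn_mk, Ssum_cons, signOf]
  norm_num
  rw [show Ssum (a ∘ Fin.succ) τ + a 0 = a 0 + Ssum (a ∘ Fin.succ) τ by ring,
    show Ssum (a ∘ Fin.succ) τ - a 0 = -(a 0) + Ssum (a ∘ Fin.succ) τ by ring]

def cdf : ℕ → ℕ
  | 0 => 1
  | (k+1) => (2*k+1) * cdf k

lemma cdf_pos (k : ℕ) : 0 < cdf k := by
  induction k with
  | zero => simp [cdf]
  | succ k ih => exact Nat.mul_pos (by omega) ih

lemma fact_two_mul (k : ℕ) : (2*k)! = 2^k * k ! * cdf k := by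
  induction k with
  | zero => simp [cdf]
  | succ k ih =>
    have h1 : 2*(k+1) = (2*k+1)+1 := by ring
    rw [h1, Nat.factorial_succ, show 2*k+1 = (2*k)+1 from rfl, Nat.factorial_succ, ih,
      Nat.factorial_succ, cdf]
    ring

lemma cdf_choose {k i : ℕ} (h : i ≤ k) :
    cdf i * cdf (k-i) * (2*k).choose (2*i) = cdf k * k.choose i := by
  have hX : 0 < 2^i * i ! * (2^(k-i) * (k-i)!) := by positivity
  apply Nat.eq_of_mul_eq_mul_right hX
  have f1 := fact_two_mul i
  have f2 := fact_two_mul (k-i)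
  have f3 := fact_two_mul k
  have c1 : (2*k).choose (2*i) * (2*i)! * (2*k-2*i)! = (2*k)! :=
    Nat.choose_mul_factorial_mul_factorial (by omega)
  have c2 : k.choose i * i ! * (k-i)! = k ! := Nat.choose_mul_factorial_mul_factorial h
  have hk : 2*k - 2*i = 2*(k-i) := by omega
  rw [hk] at c1
  have l1 : cdf i * cdf (k-i) * (2*k).choose (2*i) * (2^i * i ! * (2^(k-i) * (k-i)!))
      = (2*k).choose (2*i) * (2*i)! * (2*(k-i))! := by rw [f1, f2]; ring
  have l2 : cdf k * k.choose i * (2^i * i ! * (2^(k-i) * (k-i)!))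
      = 2^k * k ! * cdf k := by
    have hp : (2:ℕ)^i * 2^(k-i) = 2^k := by
      rw [← pow_add]; congr 1; omega
    calc cdf k * k.choose i * (2^i * i ! * (2^(k-i) * (k-i)!))
        = (2^i * 2^(k-i)) * (k.choose i * i ! * (k-i)!) * cdf k := by ring
      _ = 2^k * k ! * cdf k := by rw [hp, c2]
  rw [l1, l2, c1, ← f3]

lemma one_le_cdf (k : ℕ) : 1 ≤ cdf k := cdf_pos k

lemma cdf_choose_le {k i : ℕ} (h : i ≤ k) :
    ((2*k).choose (2*i) : ℝ) * cdf (k-i) ≤ (cdf k : ℝ) * k.choose i := by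
  have := cdf_choose h
  have h1 : ((2*k).choose (2*i) : ℝ) * cdf (k-i) * 1
      ≤ ((2*k).choose (2*i) : ℝ) * cdf (k-i) * cdf i := by
    have : (1:ℝ) ≤ cdf i := by exact_mod_cast one_le_cdf i
    have hnn : (0:ℝ) ≤ ((2*k).choose (2*i) : ℝ) * cdf (k-i) := by positivity
    exact mul_le_mul_of_nonneg_left this hnn
  calc ((2*k).choose (2*i) : ℝ) * cdf (k-i)
      = ((2*k).choose (2*i) : ℝ) * cdf (k-i) * 1 := by ring
    _ ≤ ((2*k).choose (2*i) : ℝ) * cdf (k-i) * cdf i := h1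
    _ = ((cdf i * cdf (k-i) * (2*k).choose (2*i) : ℕ) : ℝ) := by push_cast; ring
    _ = (cdf k : ℝ) * k.choose i := by rw [this]; push_cast; ring

lemma even_pow_sum (x t : ℝ) (k : ℕ) :
    (x + t)^(2*k) + (x - t)^(2*k)
      = 2 * ∑ i ∈ Finset.range (k+1), ((2*k).choose (2*i) : ℝ) * x^(2*(k-i)) * t^(2*i) := by
  have e1 : (x + t)^(2*k) = ∑ j ∈ Finset.range (2*k+1),
      t^j * x^(2*k-j) * ((2*k).choose j : ℝ) := by
    rw [add_comm x t]; exact add_pow t x (2*k)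
  have e2 : (x - t)^(2*k) = ∑ j ∈ Finset.range (2*k+1),
      (-1:ℝ)^j * (t^j * x^(2*k-j) * ((2*k).choose j : ℝ)) := by
    have : x - t = -t + x := by ring
    rw [this, add_pow]
    refine Finset.sum_congr rfl fun j _ => ?_
    rw [neg_pow]; ring
  set h : ℕ → ℝ := fun j => (1 + (-1:ℝ)^j) * (t^j * x^(2*k-j) * ((2*k).choose j : ℝ)) with hh
  have e3 : (x + t)^(2*k) + (x - t)^(2*k) = ∑ j ∈ Finset.range (2*k+1), h j := by
    rw [e1, e2, ← Finset.sum_add_distrib]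
    refine Finset.sum_congr rfl fun j _ => ?_
    simp only [hh]; ring
  have himg : (Finset.range (k+1)).image (fun i => 2*i) ⊆ Finset.range (2*k+1) := by
    intro j hj
    simp only [Finset.mem_image, Finset.mem_range] at hj ⊢
    obtain ⟨i, hi, rfl⟩ := hj; omega
  have e4 : ∑ j ∈ Finset.range (2*k+1), h j
      = ∑ j ∈ (Finset.range (k+1)).image (fun i => 2*i), h j := by
    refine (Finset.sum_subset himg fun j hj hnj => ?_).symm
    have hodd : Odd j := by
      rcases Nat.even_or_odd j with he | ho
      · exfalso; apply hnj
        obtain ⟨i, rfl⟩ := he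
        simp only [Finset.mem_image, Finset.mem_range] at hj ⊢
        exact ⟨i, by omega, by omega⟩
      · exact ho
    simp only [hh, hodd.neg_one_pow]; ring
  have e5 : ∑ j ∈ (Finset.range (k+1)).image (fun i => 2*i), h j
      = ∑ i ∈ Finset.range (k+1), h (2*i) :=
    Finset.sum_image (fun a _ b _ hab => by omega)
  rw [e3, e4, e5, Finset.mul_sum]
  refine Finset.sum_congr rfl fun i hi => ?_
  simp only [Finset.mem_range] at hi
  have : Even (2*i) := even_two_mul i
  have h2 : 2*k - 2*i = 2*(k-i) := by omega
  simp only [hh, this.neg_one_pow, h2]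
  ring


lemma sq_sum_nonneg {n : ℕ} (a : Fin n → ℝ) : (0:ℝ) ≤ ∑ j, (a j)^2 :=
  Finset.sum_nonneg fun j _ => sq_nonneg _

lemma moment_le : ∀ (n k : ℕ) (a : Fin n → ℝ),
    ∑ θ : Fin n → Bool, (Ssum a θ)^(2*k)
      ≤ 2^n * ((cdf k : ℝ) * (∑ j, (a j)^2)^k) := by
  intro n
  induction n with
  | zero =>
    intro k a
    have h0 : ∀ θ : Fin 0 → Bool, Ssum a θ = (0:ℝ) := fun θ => by
      simp [Ssum]
    rcases Nat.eq_zero_or_pos k with rfl | hk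
    · simp [h0, cdf]
    · have h2k : (2*k) ≠ 0 := by omega
      simp only [h0, zero_pow h2k, Finset.sum_const, smul_zero]
      positivity
  | succ n ih =>
    intro k a
    set a' : Fin n → ℝ := a ∘ Fin.succ with ha'
    set s2 : ℝ := ∑ j, (a' j)^2 with hs2
    have hs2nn : (0:ℝ) ≤ s2 := sq_sum_nonneg a'
    have hstep := sum_pair a (fun x => x^(2*k))
    rw [hstep]
    have hsum : ∑ j, (a j)^2 = (a 0)^2 + s2 := by
      rw [hs2, ha', Fin.sum_univ_succ]; rfl
    have step1 : ∑ τ : Fin n → Bool,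
          ((Ssum a' τ + a 0)^(2*k) + (Ssum a' τ - a 0)^(2*k))
        = 2 * ∑ i ∈ Finset.range (k+1), ((2*k).choose (2*i) : ℝ) * (a 0)^(2*i)
            * ∑ τ : Fin n → Bool, (Ssum a' τ)^(2*(k-i)) := by
      have e1 : ∀ τ : Fin n → Bool,
          (Ssum a' τ + a 0)^(2*k) + (Ssum a' τ - a 0)^(2*k)
          = ∑ i ∈ Finset.range (k+1),
              2 * (((2*k).choose (2*i) : ℝ) * (a 0)^(2*i) * (Ssum a' τ)^(2*(k-i))) := by
        intro τ
        rw [even_pow_sum (Ssum a' τ) (a 0) k, Finset.mul_sum]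
        exact Finset.sum_congr rfl fun i _ => by ring
      rw [Finset.sum_congr rfl fun τ _ => e1 τ, Finset.sum_comm, Finset.mul_sum]
      refine Finset.sum_congr rfl fun i _ => ?_
      rw [Finset.mul_sum, Finset.mul_sum]
    rw [step1]
    have step2 : ∑ i ∈ Finset.range (k+1), ((2*k).choose (2*i) : ℝ) * (a 0)^(2*i)
            * ∑ τ : Fin n → Bool, (Ssum a' τ)^(2*(k-i))
        ≤ ∑ i ∈ Finset.range (k+1),
            2^n * ((cdf k : ℝ) * (k.choose i) * ((a 0)^2)^i * s2^(k-i)) := by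
      refine Finset.sum_le_sum fun i hi => ?_
      have hik : i ≤ k := by
        have := Finset.mem_range.mp hi; omega
      have ha0 : (0:ℝ) ≤ (a 0)^(2*i) := (even_two_mul i).pow_nonneg _
      have hC : (0:ℝ) ≤ ((2*k).choose (2*i) : ℝ) * (a 0)^(2*i) := by positivity
      have h1 : ∑ τ : Fin n → Bool, (Ssum a' τ)^(2*(k-i))
          ≤ 2^n * ((cdf (k-i) : ℝ) * s2^(k-i)) := ih (k-i) a'
      calc ((2*k).choose (2*i) : ℝ) * (a 0)^(2*i)
              * ∑ τ : Fin n → Bool, (Ssum a' τ)^(2*(k-i))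
          ≤ ((2*k).choose (2*i) : ℝ) * (a 0)^(2*i)
              * (2^n * ((cdf (k-i) : ℝ) * s2^(k-i))) :=
            mul_le_mul_of_nonneg_left h1 hC
        _ = 2^n * ((((2*k).choose (2*i) : ℝ) * (cdf (k-i) : ℝ)) * ((a 0)^(2*i) * s2^(k-i))) := by
            ring
        _ ≤ 2^n * (((cdf k : ℝ) * (k.choose i : ℝ)) * ((a 0)^(2*i) * s2^(k-i))) := by
            have hnn : (0:ℝ) ≤ (a 0)^(2*i) * s2^(k-i) := by positivity
            have := cdf_choose_le hik
            have h2 : (0:ℝ) ≤ (2:ℝ)^n := by positivity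
            exact mul_le_mul_of_nonneg_left (mul_le_mul_of_nonneg_right this hnn) h2
        _ = 2^n * ((cdf k : ℝ) * (k.choose i) * ((a 0)^2)^i * s2^(k-i)) := by
            rw [← pow_mul]; ring
    have step3 : ∑ i ∈ Finset.range (k+1),
          2^n * ((cdf k : ℝ) * (k.choose i) * ((a 0)^2)^i * s2^(k-i))
        = 2^n * ((cdf k : ℝ) * ((a 0)^2 + s2)^k) := by
      symm
      rw [add_pow, Finset.mul_sum, Finset.mul_sum]
      exact Finset.sum_congr rfl fun i _ => by ring
    calc 2 * ∑ i ∈ Finset.range (k+1), ((2*k).choose (2*i) : ℝ) * (a 0)^(2*i)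
            * ∑ τ : Fin n → Bool, (Ssum a' τ)^(2*(k-i))
        ≤ 2 * ∑ i ∈ Finset.range (k+1),
            2^n * ((cdf k : ℝ) * (k.choose i) * ((a 0)^2)^i * s2^(k-i)) := by
          linarith [step2]
      _ = 2^(n+1) * ((cdf k : ℝ) * (∑ j, (a j)^2)^k) := by
          rw [step3, hsum]; ring

lemma sum_sq_eq : ∀ (n : ℕ) (a : Fin n → ℝ),
    ∑ θ : Fin n → Bool, (Ssum a θ)^2 = 2^n * ∑ j, (a j)^2 := by
  intro n
  induction n with
  | zero =>
    intro a
    have h0 : ∀ θ : Fin 0 → Bool, Ssum a θ = (0:ℝ) := fun θ => by simp [Ssum]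
    simp [h0]
  | succ n ih =>
    intro a
    have hstep := sum_pair a (fun x => x^2)
    rw [hstep]
    have : ∀ τ : Fin n → Bool,
        (Ssum (a ∘ Fin.succ) τ + a 0)^2 + (Ssum (a ∘ Fin.succ) τ - a 0)^2
        = 2 * (Ssum (a ∘ Fin.succ) τ)^2 + 2 * (a 0)^2 := fun τ => by ring
    rw [Finset.sum_congr rfl fun τ _ => this τ, Finset.sum_add_distrib,
      ← Finset.mul_sum, ih, Finset.sum_const, Finset.card_univ]
    have hcard : Fintype.card (Fin n → Bool) = 2^n := by
      simp [Fintype.card_fun]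
    rw [hcard, nsmul_eq_mul, Fin.sum_univ_succ]
    push_cast
    simp only [Function.comp]
    ring

def Ex {n : ℕ} (g : (Fin n → Bool) → ℝ) : ℝ := (2^n : ℝ)⁻¹ * ∑ θ, g θ

lemma two_pow_inv_pos (n : ℕ) : (0:ℝ) < ((2:ℝ)^n)⁻¹ := by positivity

lemma Ex_nonneg {n : ℕ} {g : (Fin n → Bool) → ℝ} (hg : ∀ θ, 0 ≤ g θ) : 0 ≤ Ex g :=
  mul_nonneg (two_pow_inv_pos n).le (Finset.sum_nonneg fun θ _ => hg θ)

lemma card_fun_bool (n : ℕ) : ((Fintype.card (Fin n → Bool) : ℕ) : ℝ) = 2^n := by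
  simp [Fintype.card_fun]

lemma Ex_one {n : ℕ} : Ex (fun _ : Fin n → Bool => (1:ℝ)) = 1 := by
  rw [Ex, Finset.sum_const, Finset.card_univ, nsmul_eq_mul, mul_one, card_fun_bool,
    inv_mul_cancel₀ (by positivity)]

lemma Ex_holder {n : ℕ} (w v : (Fin n → Bool) → ℝ) (hw : ∀ θ, 0 ≤ w θ)
    (hv : ∀ θ, 0 ≤ v θ) {p q : ℝ} (hpq : Real.HolderConjugate p q) :
    Ex (fun θ => w θ * v θ) ≤ (Ex fun θ => (w θ)^p)^(1/p) * (Ex fun θ => (v θ)^q)^(1/q) := by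
  have hc : (0:ℝ) < ((2:ℝ)^n)⁻¹ := two_pow_inv_pos n
  set c : ℝ := ((2:ℝ)^n)⁻¹ with hcdef
  have key := Real.inner_le_Lp_mul_Lq_of_nonneg (s := Finset.univ) (f := w) (g := v) hpq
    (fun i _ => hw i) (fun i _ => hv i)
  have hsw : (0:ℝ) ≤ ∑ θ, (w θ)^p := Finset.sum_nonneg fun θ _ => Real.rpow_nonneg (hw θ) _
  have hsv : (0:ℝ) ≤ ∑ θ, (v θ)^q := Finset.sum_nonneg fun θ _ => Real.rpow_nonneg (hv θ) _
  have hcc : c^(1/p) * c^(1/q) = c := by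
    rw [← Real.rpow_add hc, one_div, one_div, hpq.inv_add_inv_eq_one, Real.rpow_one]
  have hrw : (Ex fun θ => (w θ)^p)^(1/p) = c^(1/p) * (∑ θ, (w θ)^p)^(1/p) := by
    rw [Ex, Real.mul_rpow hc.le hsw]
  have hrv : (Ex fun θ => (v θ)^q)^(1/q) = c^(1/q) * (∑ θ, (v θ)^q)^(1/q) := by
    rw [Ex, Real.mul_rpow hc.le hsv]
  calc Ex (fun θ => w θ * v θ) = c * ∑ θ, w θ * v θ := rfl
    _ ≤ c * ((∑ θ, (w θ)^p)^(1/p) * (∑ θ, (v θ)^q)^(1/q)) :=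
        mul_le_mul_of_nonneg_left key hc.le
    _ = (c^(1/p) * (∑ θ, (w θ)^p)^(1/p)) * (c^(1/q) * (∑ θ, (v θ)^q)^(1/q)) := by
        rw [mul_mul_mul_comm (c^(1/p)) _ (c^(1/q)) _, hcc]
    _ = _ := by rw [hrw, hrv]

lemma Ex_pow_mean {n : ℕ} (g : (Fin n → Bool) → ℝ) (hg : ∀ θ, 0 ≤ g θ) {s t : ℝ}
    (hs : 0 < s) (hst : s < t) :
    Ex (fun θ => (g θ)^s) ≤ (Ex fun θ => (g θ)^t)^(s/t) := by
  have hp1 : 1 < t/s := (one_lt_div hs).2 hst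
  have hpq := Real.HolderConjugate.conjExponent hp1
  have key := Ex_holder (fun θ => (g θ)^s) (fun _ => 1)
    (fun θ => Real.rpow_nonneg (hg θ) _) (fun _ => zero_le_one) hpq
  simp only [mul_one, Real.one_rpow] at key
  rw [Ex_one, Real.one_rpow, mul_one] at key
  have hexp : ∀ θ, ((g θ)^s)^(t/s) = (g θ)^t := by
    intro θ
    rw [← Real.rpow_mul (hg θ)]
    congr 1
    field_simp
  simp only [hexp] at key
  rw [one_div_div] at key
  exact key

lemma Ex_pow_mean' {n : ℕ} (g : (Fin n → Bool) → ℝ) (hg : ∀ θ, 0 ≤ g θ) {s t : ℝ}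
    (hs : 0 < s) (hst : s ≤ t) :
    Ex (fun θ => (g θ)^s) ≤ (Ex fun θ => (g θ)^t)^(s/t) := by
  rcases eq_or_lt_of_le hst with rfl | h
  · rw [div_self hs.ne', Real.rpow_one]
  · exact Ex_pow_mean g hg hs h

lemma khintchine_core (r : ℝ) (hr : 0 < r) :
    ∃ C T : ℝ, 0 < C ∧ 0 < T ∧ ∀ (n : ℕ) (a : Fin n → ℝ),
      (Ex fun θ => |Ssum a θ| ^ r) ^ (1/r) ≤ C * (∑ j, |a j| ^ (2:ℝ)) ^ (1/(2:ℝ)) ∧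
      (∑ j, |a j| ^ (2:ℝ)) ^ (1/(2:ℝ)) ≤ T * (Ex fun θ => |Ssum a θ| ^ r) ^ (1/r) := by
  set k : ℕ := ⌈r⌉₊ + 2 with hk
  set t0 : ℝ := ((2*k : ℕ) : ℝ) with ht0
  have hkr : r ≤ (k : ℝ) := by
    calc r ≤ (⌈r⌉₊ : ℝ) := Nat.le_ceil r
      _ ≤ (k : ℝ) := by exact_mod_cast Nat.le_add_right _ 2
  have ht0k : t0 = 2 * (k : ℝ) := by push_cast [ht0]; ring
  have hk2 : (2:ℝ) ≤ (k:ℝ) := by exact_mod_cast Nat.le_add_left 2 ⌈r⌉₊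
  have hrt0 : r < t0 := by rw [ht0k]; nlinarith
  have h2t0 : (2:ℝ) < t0 := by rw [ht0k]; nlinarith
  have ht0pos : (0:ℝ) < t0 := lt_trans two_pos h2t0
  set c : ℝ := (cdf k : ℝ) with hc
  have hc1 : (1:ℝ) ≤ c := by rw [hc]; exact_mod_cast one_le_cdf k
  have hc0 : (0:ℝ) < c := lt_of_lt_of_le one_pos hc1
  set C : ℝ := c ^ (1/t0) with hC
  have hC1 : (1:ℝ) ≤ C := Real.one_le_rpow hc1 (by positivity)
  have hCpos : (0:ℝ) < C := lt_of_lt_of_le one_pos hC1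
  -- choose T by cases later; first the common facts
  refine ⟨C, if 2 ≤ r then 1 else c ^ ((1 - (t0-2)/(t0-r))/(((t0-2)/(t0-r))*r)), hCpos, ?_, ?_⟩
  · split
    · exact one_pos
    · positivity
  intro n a
  set s2 : ℝ := ∑ j, (a j)^2 with hs2def
  have hs2 : (0:ℝ) ≤ s2 := sq_sum_nonneg a
  have habs2 : ∑ j, |a j| ^ (2:ℝ) = s2 := by
    refine Finset.sum_congr rfl fun j _ => ?_
    rw [show (2:ℝ) = ((2:ℕ):ℝ) by norm_num, Real.rpow_natCast, sq_abs]
  set σ : ℝ := s2 ^ (1/(2:ℝ)) with hσdef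
  have hσ : 0 ≤ σ := Real.rpow_nonneg hs2 _
  have habsS : ∀ (p : ℕ) θ, |Ssum a θ| ^ ((p:ℝ)*2) = (Ssum a θ)^(2*p) := by
    intro p θ
    rw [show ((p:ℝ)*2) = (((2*p : ℕ)):ℝ) by push_cast; ring, Real.rpow_natCast,
      pow_abs, abs_of_nonneg ((even_two_mul p).pow_nonneg _)]
  have hm2 : Ex (fun θ => |Ssum a θ| ^ (2:ℝ)) = s2 := by
    have heq2 : (fun θ : Fin n → Bool => |Ssum a θ| ^ (2:ℝ))
        = fun θ => (Ssum a θ)^2 := by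
      funext θ
      norm_num [sq_abs]
    rw [heq2, Ex, sum_sq_eq n a, ← mul_assoc,
      inv_mul_cancel₀ (by positivity : ((2:ℝ)^n) ≠ 0), one_mul]
  have hmt0 : Ex (fun θ => |Ssum a θ| ^ t0) ≤ c * s2 ^ k := by
    have heq : (fun θ : Fin n → Bool => |Ssum a θ| ^ t0) = fun θ => (Ssum a θ)^(2*k) := by
      funext θ; rw [← habsS k]; congr 1; rw [ht0k]; ring
    rw [heq, Ex]
    have := moment_le n k a
    calc ((2:ℝ)^n)⁻¹ * ∑ θ : Fin n → Bool, (Ssum a θ)^(2*k)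
        ≤ ((2:ℝ)^n)⁻¹ * (2^n * ((cdf k : ℝ) * s2^k)) := by
          apply mul_le_mul_of_nonneg_left _ (two_pow_inv_pos n).le
          exact_mod_cast this
      _ = c * s2^k := by
          rw [← mul_assoc, inv_mul_cancel₀ (by positivity : ((2:ℝ)^n) ≠ 0), one_mul]
  set mr : ℝ := Ex (fun θ => |Ssum a θ| ^ r) with hmrdef
  have hmr0 : 0 ≤ mr := Ex_nonneg fun θ => Real.rpow_nonneg (abs_nonneg _) _
  have hmt00 : 0 ≤ Ex (fun θ => |Ssum a θ| ^ t0) :=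
    Ex_nonneg fun θ => Real.rpow_nonneg (abs_nonneg _) _
  have hs2k : (s2 ^ k : ℝ) = s2 ^ ((k:ℕ):ℝ) := (Real.rpow_natCast s2 k).symm
  have hs2kt0 : (s2 ^ k) ^ (1/t0) = σ := by
    rw [hs2k, ← Real.rpow_mul hs2, hσdef]
    congr 1
    rw [ht0k]
    field_simp
  constructor
  · -- lower: A ≤ C * σ
    have pm : mr ≤ (Ex fun θ => |Ssum a θ| ^ t0) ^ (r/t0) :=
      Ex_pow_mean' (fun θ => |Ssum a θ|) (fun θ => abs_nonneg _) hr hrt0.le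
    have step : mr ≤ (c * s2 ^ k) ^ (r/t0) :=
      le_trans pm (Real.rpow_le_rpow hmt00 hmt0 (by positivity))
    have : mr ^ (1/r) ≤ ((c * s2 ^ k) ^ (r/t0)) ^ (1/r) :=
      Real.rpow_le_rpow hmr0 step (by positivity)
    refine le_trans this ?_
    rw [← Real.rpow_mul (by positivity : (0:ℝ) ≤ c * s2^k)]
    rw [show r/t0 * (1/r) = 1/t0 by field_simp]
    rw [Real.mul_rpow hc0.le (by positivity), hs2kt0, habs2]
  · -- upper: σ ≤ T * A
    rw [habs2]
    by_cases h2r : 2 ≤ r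
    · simp only [if_pos h2r]
      have pm : s2 ≤ mr ^ (2/r) := by
        have := Ex_pow_mean' (fun θ => |Ssum a θ|) (fun θ => abs_nonneg _) two_pos h2r
        rwa [hm2] at this
      have : σ ≤ (mr ^ (2/r)) ^ (1/(2:ℝ)) := Real.rpow_le_rpow hs2 pm (by positivity)
      refine le_trans this ?_
      rw [← Real.rpow_mul hmr0, show (2/r) * (1/(2:ℝ)) = 1/r by field_simp, one_mul]
    · simp only [if_neg h2r]
      push_neg at h2r
      set lam : ℝ := (t0-2)/(t0-r) with hlam
      have htr : (0:ℝ) < t0 - r := by linarith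
      have hlam0 : 0 < lam := by
        apply _root_.div_pos <;> linarith
      have hlam1 : lam < 1 := by
        rw [hlam, div_lt_one htr]; linarith
      have hlamsum : lam * r + (1-lam) * t0 = 2 := by
        rw [hlam]; field_simp; ring
      -- Hölder
      have hpq : (1/lam).HolderConjugate (1/(1-lam)) :=
        Real.holderConjugate_one_div hlam0 (by linarith) (by ring)
      have key := Ex_holder (fun θ => |Ssum a θ| ^ (lam * r))
        (fun θ => |Ssum a θ| ^ ((1-lam) * t0))
        (fun θ => Real.rpow_nonneg (abs_nonneg _) _)
        (fun θ => Real.rpow_nonneg (abs_nonneg _) _) hpq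
      have e1 : (fun θ : Fin n → Bool => |Ssum a θ| ^ (lam*r) * |Ssum a θ| ^ ((1-lam)*t0))
          = fun θ => |Ssum a θ| ^ (2:ℝ) := by
        funext θ
        rw [← Real.rpow_add' (abs_nonneg _) (by rw [hlamsum]; norm_num), hlamsum]
      have e2 : (fun θ : Fin n → Bool => (|Ssum a θ| ^ (lam*r)) ^ (1/lam))
          = fun θ => |Ssum a θ| ^ r := by
        funext θ
        rw [← Real.rpow_mul (abs_nonneg _)]
        congr 1
        field_simp
      have e3 : (fun θ : Fin n → Bool => (|Ssum a θ| ^ ((1-lam)*t0)) ^ (1/(1-lam)))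
          = fun θ => |Ssum a θ| ^ t0 := by
        funext θ
        rw [← Real.rpow_mul (abs_nonneg _)]
        congr 1
        have : (1:ℝ) - lam ≠ 0 := by linarith
        field_simp
      rw [e1, e2, e3, hm2, one_div_one_div, one_div_one_div] at key
      -- key : s2 ≤ mr ^ lam * (Ex |S|^t0) ^ (1-lam)
      have key2 : s2 ≤ mr ^ lam * (c * s2 ^ k) ^ (1-lam) := by
        refine le_trans key ?_
        exact mul_le_mul_of_nonneg_left
          (Real.rpow_le_rpow hmt00 hmt0 (by linarith)) (Real.rpow_nonneg hmr0 _)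
      rcases eq_or_lt_of_le hs2 with hs20 | hs2pos
      · have hz : s2 = 0 := hs20.symm
        rw [hz, Real.zero_rpow (by norm_num : (1/(2:ℝ)) ≠ 0)]
        positivity
      · -- divide by s2^(k*(1-lam))
        have hsplit : s2 = s2 ^ (lam*r/2) * s2 ^ ((k:ℝ)*(1-lam)) := by
          rw [← Real.rpow_add hs2pos]
          rw [show lam*r/2 + (k:ℝ)*(1-lam) = 1 by
            have hkt : (k:ℝ) = t0/2 := by rw [ht0k]; ring
            rw [hkt]; field_simp; linarith [hlamsum]]
          rw [Real.rpow_one]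
        have hck : (c * s2 ^ k) ^ (1-lam) = c ^ (1-lam) * s2 ^ ((k:ℝ)*(1-lam)) := by
          rw [Real.mul_rpow hc0.le (by positivity), hs2k, ← Real.rpow_mul hs2]
        have key3 : s2 ^ (lam*r/2) * s2 ^ ((k:ℝ)*(1-lam))
            ≤ (mr ^ lam * c ^ (1-lam)) * s2 ^ ((k:ℝ)*(1-lam)) := by
          calc s2 ^ (lam*r/2) * s2 ^ ((k:ℝ)*(1-lam)) = s2 := hsplit.symm
            _ ≤ mr ^ lam * (c * s2 ^ k) ^ (1-lam) := key2
            _ = (mr ^ lam * c ^ (1-lam)) * s2 ^ ((k:ℝ)*(1-lam)) := by rw [hck]; ring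
        have hpos : (0:ℝ) < s2 ^ ((k:ℝ)*(1-lam)) := Real.rpow_pos_of_pos hs2pos _
        have key4 : s2 ^ (lam*r/2) ≤ mr ^ lam * c ^ (1-lam) :=
          le_of_mul_le_mul_right key3 hpos
        have key5 : (s2 ^ (lam*r/2)) ^ (1/(lam*r)) ≤ (mr ^ lam * c ^ (1-lam)) ^ (1/(lam*r)) :=
          Real.rpow_le_rpow (Real.rpow_nonneg hs2 _) key4 (by positivity)
        have hl : (s2 ^ (lam*r/2)) ^ (1/(lam*r)) = σ := by
          rw [← Real.rpow_mul hs2, hσdef]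
          congr 1
          field_simp
        have hrr : (mr ^ lam * c ^ (1-lam)) ^ (1/(lam*r))
            = c ^ ((1-lam)/(lam*r)) * mr ^ (1/r) := by
          rw [Real.mul_rpow (Real.rpow_nonneg hmr0 _) (Real.rpow_nonneg hc0.le _),
            ← Real.rpow_mul hmr0, ← Real.rpow_mul hc0.le]
          rw [show lam * (1/(lam*r)) = 1/r by field_simp, show (1-lam) * (1/(lam*r)) = (1-lam)/(lam*r) by ring]
          ring
        rw [hl, hrr] at key5
        exact key5

end Kh

/-- lattice-valued Khintchine inequalities. -/
theorem lattice_khintchine :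
    ∀ r : ℝ, 0 < r → ∃ C T : ℝ, 0 < C ∧ 0 < T ∧
      ∀ {Ω : Type*} (mem : (Ω → ℝ) → Prop) (q : (Ω → ℝ) → ℝ), IsQBLattice mem q →
        ∀ (n : ℕ) (f : Fin n → Ω → ℝ), (∀ j, mem (f j)) →
          (∀ ω, C⁻¹ * radAve r f ω ≤ vTwo f ω) ∧
          (∀ ω, vTwo f ω ≤ T * radAve r f ω) := by
  intro r hr
  obtain ⟨C, T, hC, hT, h⟩ := Kh.khintchine_core r hr
  refine ⟨C, T, hC, hT, ?_⟩
  intro Ω mem q _ n f _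
  have hrad : ∀ ω, radAve r f ω
      = (Kh.Ex fun θ => |Kh.Ssum (fun j => f j ω) θ| ^ r) ^ (1/r) := fun ω => rfl
  have hv : ∀ ω, vTwo f ω = (∑ j, |f j ω| ^ (2:ℝ)) ^ (1/(2:ℝ)) := fun ω => rfl
  constructor
  · intro ω
    have hle := (h n (fun j => f j ω)).1
    rw [hrad ω, hv ω]
    calc C⁻¹ * (Kh.Ex fun θ => |Kh.Ssum (fun j => f j ω) θ| ^ r) ^ (1/r)
        ≤ C⁻¹ * (C * (∑ j, |f j ω| ^ (2:ℝ)) ^ (1/(2:ℝ))) :=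
          mul_le_mul_of_nonneg_left hle (inv_nonneg.mpr hC.le)
      _ = (∑ j, |f j ω| ^ (2:ℝ)) ^ (1/(2:ℝ)) := by
          field_simp
  · intro ω
    rw [hrad ω, hv ω]
    exact (h n (fun j => f j ω)).2

end
end

section
/- Let L be a square-stable sequence space over ℕ. For each j∈ℕ, let 𝕏_j be a quasi-Banach space with a K-unconditional basis X_j (the moduli of concavity of the 𝕏_j uniformly bounded), and assume there is a constant C such that X_j is permutatively C-equivalent to a subbasis of X_k whenever j≤k. Then the unconditional basis ⊕_{j=1}^∞ X_j of (⊕_{j=1}^∞ 𝕏_j)_L is permutatively equivalent to its square. -/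
/-!
Statement 17: Let `L` be a square-stable sequence space over `ℕ`. For each `j ∈ ℕ`, let `𝕏_j`
be a quasi-Banach space with a `K`-unconditional basis `X_j` (the moduli of concavity of the
`𝕏_j` uniformly bounded), and assume there is a constant `C` such that `X_j` is permutatively
`C`-equivalent to a subbasis of `X_k` whenever `j ≤ k`. Then the unconditional basis
`⊕_j X_j` of `(⊕_j 𝕏_j)_L` is permutatively equivalent to its square.
-/

noncomputable section
open Filter Topology

/-- `q` is a quasi-norm with modulus of concavity at most `C₀` making `M` a quasi-Banach
space. -/
structure IsQuasiNormWith {M : Type*} [AddCommGroup M] [Module ℝ M] (q : M → ℝ)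
    (C₀ : ℝ) : Prop where
  q_nonneg : ∀ f, 0 ≤ q f
  q_pos : ∀ f, f ≠ 0 → 0 < q f
  q_smul : ∀ (c : ℝ) (f : M), q (c • f) = |c| * q f
  quasi_triangle : ∀ f g, q (f + g) ≤ C₀ * (q f + q g)
  complete : ∀ F : ℕ → M,
    (∀ ε : ℝ, 0 < ε → ∃ N, ∀ m ≥ N, ∀ n ≥ N, q (F m - F n) < ε) →
    ∃ g, Tendsto (fun n => q (F n - g)) atTop (nhds 0)

/-- `(memL, qL)` is a sequence space over `ℕ`: a solid quasi-Banach function lattice on `ℕ`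
in which the unit vectors are normalized. -/
structure IsSequenceSpace (memL : (ℕ → ℝ) → Prop) (qL : (ℕ → ℝ) → ℝ) : Prop where
  zero_mem : memL 0
  add_mem : ∀ ⦃f g⦄, memL f → memL g → memL (f + g)
  smul_mem : ∀ (c : ℝ) ⦃f⦄, memL f → memL (c • f)
  solid : ∀ ⦃f g : ℕ → ℝ⦄, memL g → (∀ n, |f n| ≤ |g n|) → memL f
  q_nonneg : ∀ f, 0 ≤ qL f
  q_pos : ∀ ⦃f⦄, memL f → f ≠ 0 → 0 < qL f
  q_smul : ∀ (c : ℝ) (f : ℕ → ℝ), qL (c • f) = |c| * qL f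
  q_mono : ∀ ⦃f g⦄, memL f → memL g → (∀ n, |f n| ≤ |g n|) → qL f ≤ qL g
  quasi_triangle : ∃ C : ℝ, 1 ≤ C ∧ ∀ ⦃f g⦄, memL f → memL g → qL (f + g) ≤ C * (qL f + qL g)
  complete : ∀ F : ℕ → ℕ → ℝ, (∀ n, memL (F n)) →
    (∀ ε : ℝ, 0 < ε → ∃ N, ∀ m ≥ N, ∀ n ≥ N, qL (F m - F n) < ε) →
    ∃ g, memL g ∧ Tendsto (fun n => qL (F n - g)) atTop (nhds 0)
  unit_mem : ∀ n : ℕ, memL (Pi.single n 1)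
  unit_norm : ∀ n : ℕ, qL (Pi.single n 1) = 1

/-- The interleaving of two scalar sequences along a one-to-one map `π : {1,2}×ℕ → ℕ`,
i.e. the shift `S_π` applied to the pair `(a, b) ∈ L²`. -/
def interleave (π : Bool × ℕ → ℕ) (a b : ℕ → ℝ) : ℕ → ℝ :=
  Function.extend π (fun p => if p.1 then a p.2 else b p.2) 0

/-- `L` is square-stable: there is a one-to-one map `π : {1,2}×ℕ → ℕ`, increasing in each
variable, such that the shift `S_π` restricts to an isomorphic embedding of `L²`
(with the max quasi-norm) into `L`. -/
def SquareStable (memL : (ℕ → ℝ) → Prop) (qL : (ℕ → ℝ) → ℝ) : Prop :=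
  ∃ π : Bool × ℕ → ℕ, Function.Injective π ∧
    StrictMono (fun n => π (false, n)) ∧ StrictMono (fun n => π (true, n)) ∧
    ∃ c C : ℝ, 0 < c ∧ 0 < C ∧ ∀ a b : ℕ → ℝ, memL a → memL b →
      memL (interleave π a b) ∧
      c * max (qL a) (qL b) ≤ qL (interleave π a b) ∧
      qL (interleave π a b) ≤ C * max (qL a) (qL b)

def UncondSum {M ι : Type*} [AddCommGroup M] (q : M → ℝ) (v : ι → M) (f : M) : Prop :=
  ∀ ε : ℝ, 0 < ε → ∃ F : Finset ι, ∀ G : Finset ι, F ⊆ G → q ((∑ n ∈ G, v n) - f) < ε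

/-- `x` is a `K`-unconditional basis: every element has a unique unconditionally convergent
expansion, and coefficientwise-dominated finite linear combinations have `K`-comparable
quasi-norms. -/
def IsKUncondBasis {M ι : Type*} [AddCommGroup M] [Module ℝ M] (q : M → ℝ)
    (x : ι → M) (K : ℝ) : Prop :=
  (∀ f : M, ∃! a : ι → ℝ, UncondSum q (fun n => a n • x n) f) ∧
  (∀ a b : ι →₀ ℝ, (∀ n, |b n| ≤ |a n|) →
    q (∑ n ∈ b.support, b n • x n) ≤ K * q (∑ n ∈ a.support, a n • x n))

/-- Two families, in possibly different quasi-Banach spaces, are `C`-equivalent. -/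
def EquivalentFamilies {M M' ι : Type*} [AddCommGroup M] [Module ℝ M]
    [AddCommGroup M'] [Module ℝ M'] (q : M → ℝ) (q' : M' → ℝ)
    (x : ι → M) (y : ι → M') (C : ℝ) : Prop :=
  ∀ a : ι →₀ ℝ,
    C⁻¹ * q (∑ n ∈ a.support, a n • x n) ≤ q' (∑ n ∈ a.support, a n • y n) ∧
    q' (∑ n ∈ a.support, a n • y n) ≤ C * q (∑ n ∈ a.support, a n • x n)
/-! ### Auxiliary lemmas -/

section Aux

/-- A structured Cantor–Schröder–Bernstein theorem: the bijection agrees pointwise either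
with the forward injection or with the inverse of the backward injection. -/
theorem csb_struct' {α β : Type*} [Nonempty α] (f : α → β) (g : β → α)
    (hf : Function.Injective f) (hg : Function.Injective g) :
    ∃ h : α ≃ β, ∀ a, h a = f a ∨ g (h a) = a := by
  classical
  haveI : Nonempty β := ⟨f (Classical.arbitrary α)⟩
  set k : α → α := fun a => g (f a) with hk
  set A : Set α := ⋃ n, k^[n] '' (Set.range g)ᶜ with hA
  have hcompl : (Set.range g)ᶜ ⊆ A := by
    intro a ha
    exact Set.mem_iUnion.2 ⟨0, by simpa using ha⟩
  have hmemA : ∀ a, a ∉ A → a ∈ Set.range g := by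
    intro a ha
    by_contra h'
    exact ha (hcompl h')
  have hkA : ∀ a ∈ A, k a ∈ A := by
    intro a ha
    rcases Set.mem_iUnion.1 ha with ⟨n, y, hy, rfl⟩
    exact Set.mem_iUnion.2 ⟨n + 1, y, hy, by rw [Function.iterate_succ_apply']⟩
  set F : α → β := fun a => if a ∈ A then f a else Function.invFun g a with hF
  have hFA : ∀ a ∈ A, F a = f a := by intro a ha; simp [hF, ha]
  have hFnA : ∀ a, a ∉ A → g (F a) = a := by
    intro a ha
    simp only [hF, if_neg ha]
    exact Function.invFun_eq (hmemA a ha)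
  have hinj : Function.Injective F := by
    intro a₁ a₂ h12
    by_cases h1 : a₁ ∈ A <;> by_cases h2 : a₂ ∈ A
    · exact hf (by rwa [hFA a₁ h1, hFA a₂ h2] at h12)
    · exfalso
      have he : a₂ = k a₁ := by
        rw [hk]; rw [← hFnA a₂ h2, ← h12, hFA a₁ h1]
      exact h2 (he ▸ hkA a₁ h1)
    · exfalso
      have he : a₁ = k a₂ := by
        rw [hk]; rw [← hFnA a₁ h1, h12, hFA a₂ h2]
      exact h1 (he ▸ hkA a₂ h2)
    · rw [← hFnA a₁ h1, ← hFnA a₂ h2, h12]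
  have hsurj : Function.Surjective F := by
    intro b
    by_cases hb : g b ∈ A
    · rcases Set.mem_iUnion.1 hb with ⟨n, y, hy, hyb⟩
      cases n with
      | zero =>
          simp only [Function.iterate_zero_apply] at hyb
          exact absurd ⟨b, hyb.symm⟩ hy
      | succ m =>
          have h1 : k (k^[m] y) = g b := by
            rw [← Function.iterate_succ_apply' k m y]; exact hyb
          have hfb : f (k^[m] y) = b := hg h1
          have hmem : k^[m] y ∈ A := Set.mem_iUnion.2 ⟨m, y, hy, rfl⟩
          exact ⟨k^[m] y, by rw [hFA _ hmem, hfb]⟩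
    · refine ⟨g b, ?_⟩
      rw [hF]
      simp only [if_neg hb]
      exact Function.leftInverse_invFun hg b
  refine ⟨Equiv.ofBijective F ⟨hinj, hsurj⟩, fun a => ?_⟩
  by_cases ha : a ∈ A
  · left; exact hFA a ha
  · right; exact hFnA a ha

variable {memL : (ℕ → ℝ) → Prop} {qL : (ℕ → ℝ) → ℝ}
variable {𝕏 : ℕ → Type*} [∀ j, AddCommGroup (𝕏 j)] [∀ j, Module ℝ (𝕏 j)]
variable {ι : ℕ → Type} {qX : ∀ j, 𝕏 j → ℝ}

/-- Finite linear combination of the direct-sum basis, shifted along `ν` and the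
fibrewise embeddings `em`. -/
def SS (x : ∀ j, ι j → 𝕏 j) (ν : ℕ → ℕ) (em : ∀ j, ι j → ι (ν j))
    (e : (Σ j, ι j) →₀ ℝ) : ∀ j, 𝕏 j :=
  e.sum fun s r => r • Pi.single (ν s.1) (x (ν s.1) (em s.1 s.2))

/-- The lattice quasi-norm on the direct sum. -/
def qB (qL : (ℕ → ℝ) → ℝ) (qX : ∀ j, 𝕏 j → ℝ) (f : ∀ j, 𝕏 j) : ℝ :=
  qL fun j => qX j (f j)

theorem IsQuasiNormWith.q_zero {M : Type*} [AddCommGroup M] [Module ℝ M] {q : M → ℝ}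
    {C₀ : ℝ} (h : IsQuasiNormWith q C₀) : q 0 = 0 := by
  have := h.q_smul 0 0
  simpa using this

theorem IsSequenceSpace.qL_zero (hL : IsSequenceSpace memL qL) : qL 0 = 0 := by
  have := hL.q_smul 0 0
  simpa using this

theorem memL_of_support (hL : IsSequenceSpace memL qL) (f : ℕ → ℝ) (F : Finset ℕ)
    (hf : ∀ n ∉ F, f n = 0) : memL f := by
  classical
  have hmem : ∀ G : Finset ℕ, memL (∑ n ∈ G, f n • (Pi.single n (1 : ℝ) : ℕ → ℝ)) := by
    intro G
    induction G using Finset.induction with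
    | empty => simpa using hL.zero_mem
    | insert _ _ hnotmem ih =>
        rw [Finset.sum_insert hnotmem]
        exact hL.add_mem (hL.smul_mem _ (hL.unit_mem _)) ih
  have hfe : f = ∑ n ∈ F, f n • (Pi.single n (1 : ℝ) : ℕ → ℝ) := by
    funext m
    rw [Finset.sum_apply]
    simp only [Pi.smul_apply, Pi.single_apply, smul_eq_mul, mul_ite, mul_one, mul_zero]
    rw [Finset.sum_ite_eq F m f]
    by_cases hm : m ∈ F
    · simp [hm]
    · simp [hm, hf m hm]
  rw [hfe]
  exact hmem F

theorem SS_apply_eq (x : ∀ j, ι j → 𝕏 j) (ν : ℕ → ℕ) (hν : Function.Injective ν)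
    (em : ∀ j, ι j → ι (ν j)) (e : (Σ j, ι j) →₀ ℝ) (j : ℕ) :
    SS x ν em e (ν j)
      = ∑ i ∈ (e.comapDomain (Sigma.mk j) sigma_mk_injective.injOn).support,
          (e.comapDomain (Sigma.mk j) sigma_mk_injective.injOn) i • x (ν j) (em j i) := by
  classical
  rw [SS, Finsupp.sum, Finset.sum_apply]
  have hvan : ∀ s ∈ e.support, s ∉ Set.range (Sigma.mk j) →
      (fun s : Σ k, ι k =>
        (e s • Pi.single (ν s.1) (x (ν s.1) (em s.1 s.2)) : ∀ k, 𝕏 k) (ν j)) s = 0 := by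
    intro s _ hs
    have h1 : s.1 ≠ j := by
      obtain ⟨s1, s2⟩ := s
      intro hh
      cases hh
      exact hs ⟨s2, rfl⟩
    have h2 : (ν j) ≠ (ν s.1) := fun hh => h1 (hν hh.symm)
    simp [Pi.single_eq_of_ne h2]
  have key := Finset.sum_preimage (Sigma.mk j) e.support sigma_mk_injective.injOn
      (fun s : Σ k, ι k =>
        (e s • Pi.single (ν s.1) (x (ν s.1) (em s.1 s.2)) : ∀ k, 𝕏 k) (ν j)) hvan
  rw [← key]
  refine Finset.sum_congr ?_ fun i _ => ?_
  · simp [Finsupp.comapDomain]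
  · simp [Pi.single_eq_same]

theorem SS_apply_zero (x : ∀ j, ι j → 𝕏 j) (ν : ℕ → ℕ) (em : ∀ j, ι j → ι (ν j))
    (e : (Σ j, ι j) →₀ ℝ) (m : ℕ) (hm : ∀ s ∈ e.support, ν s.1 ≠ m) :
    SS x ν em e m = 0 := by
  classical
  rw [SS, Finsupp.sum, Finset.sum_apply]
  refine Finset.sum_eq_zero fun s hs => ?_
  have : m ≠ ν s.1 := fun hh => hm s hs hh.symm
  simp [Pi.single_eq_of_ne this]

end Aux
section Aux2

variable {memL : (ℕ → ℝ) → Prop} {qL : (ℕ → ℝ) → ℝ}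
variable {𝕏 : ℕ → Type*} [∀ j, AddCommGroup (𝕏 j)] [∀ j, Module ℝ (𝕏 j)]
variable {ι : ℕ → Type} {qX : ∀ j, 𝕏 j → ℝ}

theorem qB_uncond (hL : IsSequenceSpace memL qL) {C₀ : ℝ} (hqX : ∀ j, IsQuasiNormWith (qX j) C₀)
    {x : ∀ j, ι j → 𝕏 j} {K : ℝ} (hbasis : ∀ j, IsKUncondBasis (qX j) (x j) K) (hK : 0 ≤ K)
    (a b : (Σ j, ι j) →₀ ℝ) (hab : ∀ s, |b s| ≤ |a s|) :
    qB qL qX (SS x id (fun _ => id) b) ≤ K * qB qL qX (SS x id (fun _ => id) a) := by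
  classical
  set ua : ℕ → ℝ := fun j => qX j (SS x id (fun _ => id) a j) with hua
  set ub : ℕ → ℝ := fun j => qX j (SS x id (fun _ => id) b j) with hub
  have hpt : ∀ j, ub j ≤ K * ua j := by
    intro j
    have h1 : SS x id (fun _ => id) a j
        = ∑ i ∈ (a.comapDomain (Sigma.mk j) sigma_mk_injective.injOn).support,
            (a.comapDomain (Sigma.mk j) sigma_mk_injective.injOn) i • x j i :=
      SS_apply_eq x id Function.injective_id (fun _ => id) a j
    have h2 : SS x id (fun _ => id) b j
        = ∑ i ∈ (b.comapDomain (Sigma.mk j) sigma_mk_injective.injOn).support,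
            (b.comapDomain (Sigma.mk j) sigma_mk_injective.injOn) i • x j i :=
      SS_apply_eq x id Function.injective_id (fun _ => id) b j
    have h3 := (hbasis j).2 (a.comapDomain (Sigma.mk j) sigma_mk_injective.injOn)
      (b.comapDomain (Sigma.mk j) sigma_mk_injective.injOn)
      (fun i => by simpa using hab ⟨j, i⟩)
    rw [hua, hub]
    simpa only [← h1, ← h2] using h3
  have hua0 : ∀ j ∉ a.support.image Sigma.fst, ua j = 0 := by
    intro j hj
    have hz : SS x id (fun _ => id) a j = 0 :=
      SS_apply_zero x id (fun _ => id) a j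
        (fun s hs hh => hj (Finset.mem_image.2 ⟨s, hs, hh⟩))
    rw [hua]
    simp only [hz]
    exact (hqX j).q_zero
  have hub0 : ∀ j ∉ b.support.image Sigma.fst, ub j = 0 := by
    intro j hj
    have hz : SS x id (fun _ => id) b j = 0 :=
      SS_apply_zero x id (fun _ => id) b j
        (fun s hs hh => hj (Finset.mem_image.2 ⟨s, hs, hh⟩))
    rw [hub]
    simp only [hz]
    exact (hqX j).q_zero
  have hma : memL ua := memL_of_support hL ua _ hua0
  have hmb : memL ub := memL_of_support hL ub _ hub0
  have hmono : qL ub ≤ qL (K • ua) := by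
    refine hL.q_mono hmb (hL.smul_mem K hma) fun j => ?_
    have h0b : 0 ≤ ub j := (hqX j).q_nonneg _
    have h0a : 0 ≤ ua j := (hqX j).q_nonneg _
    have : |ub j| = ub j := abs_of_nonneg h0b
    rw [this, Pi.smul_apply, smul_eq_mul, abs_of_nonneg (mul_nonneg hK h0a)]
    exact hpt j
  show qL ub ≤ K * qL ua
  calc qL ub ≤ qL (K • ua) := hmono
    _ = |K| * qL ua := hL.q_smul K ua
    _ = K * qL ua := by rw [abs_of_nonneg hK]

theorem qB_add_le (hL : IsSequenceSpace memL qL) {C₀ : ℝ}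
    (hqX : ∀ j, IsQuasiNormWith (qX j) C₀) (hC₀ : 0 ≤ C₀)
    {CL : ℝ} (hCL : ∀ ⦃f g⦄, memL f → memL g → qL (f + g) ≤ CL * (qL f + qL g))
    (f g : ∀ j, 𝕏 j) (F : Finset ℕ) (hf : ∀ j ∉ F, f j = 0) (hg : ∀ j ∉ F, g j = 0) :
    qB qL qX (f + g) ≤ (C₀ * CL) * (qB qL qX f + qB qL qX g) := by
  set uf : ℕ → ℝ := fun j => qX j (f j) with huf
  set ug : ℕ → ℝ := fun j => qX j (g j) with hug
  set ufg : ℕ → ℝ := fun j => qX j ((f + g) j) with hufg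
  have hmf : memL uf := memL_of_support hL uf F fun j hj => by
    rw [huf]; simp only [hf j hj]; exact (hqX j).q_zero
  have hmg : memL ug := memL_of_support hL ug F fun j hj => by
    rw [hug]; simp only [hg j hj]; exact (hqX j).q_zero
  have hpt : ∀ j, |ufg j| ≤ |(C₀ • (uf + ug)) j| := by
    intro j
    have h1 : ufg j ≤ C₀ * (uf j + ug j) := by
      rw [hufg]
      simpa using (hqX j).quasi_triangle (f j) (g j)
    have h0 : 0 ≤ ufg j := (hqX j).q_nonneg _
    have h0' : 0 ≤ C₀ * (uf j + ug j) :=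
      mul_nonneg hC₀ (add_nonneg ((hqX j).q_nonneg _) ((hqX j).q_nonneg _))
    rw [abs_of_nonneg h0, Pi.smul_apply, Pi.add_apply, smul_eq_mul, abs_of_nonneg h0']
    exact h1
  have hmsum : memL (C₀ • (uf + ug)) := hL.smul_mem _ (hL.add_mem hmf hmg)
  have hmufg : memL ufg := hL.solid hmsum hpt
  show qL ufg ≤ (C₀ * CL) * (qL uf + qL ug)
  calc qL ufg ≤ qL (C₀ • (uf + ug)) := hL.q_mono hmufg hmsum hpt
    _ = |C₀| * qL (uf + ug) := hL.q_smul _ _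
    _ ≤ C₀ * (CL * (qL uf + qL ug)) := by
        rw [abs_of_nonneg hC₀]
        exact mul_le_mul_of_nonneg_left (hCL hmf hmg) hC₀
    _ = (C₀ * CL) * (qL uf + qL ug) := by ring

theorem SS_shift_equiv (hL : IsSequenceSpace memL qL) {C₀ : ℝ}
    (hqX : ∀ j, IsQuasiNormWith (qX j) C₀)
    {x : ∀ j, ι j → 𝕏 j} {C c CS : ℝ} (hC : 0 < C) (hc : 0 < c)
    (ν : ℕ → ℕ) (hν : Function.Injective ν) (em : ∀ j, ι j → ι (ν j))
    (hem : ∀ j, EquivalentFamilies (qX j) (qX (ν j)) (x j) (fun i => x (ν j) (em j i)) C)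
    (hshift : ∀ u : ℕ → ℝ, memL u → memL (Function.extend ν u 0) ∧
      c * qL u ≤ qL (Function.extend ν u 0) ∧ qL (Function.extend ν u 0) ≤ CS * qL u)
    (e : (Σ j, ι j) →₀ ℝ) :
    qB qL qX (SS x ν em e) ≤ (C * CS) * qB qL qX (SS x id (fun _ => id) e) ∧
    qB qL qX (SS x id (fun _ => id) e) ≤ (c⁻¹ * C) * qB qL qX (SS x ν em e) := by
  classical
  set u : ℕ → ℝ := fun j => qX j (SS x id (fun _ => id) e j) with hu
  set v : ℕ → ℝ := fun m => qX m (SS x ν em e m) with hv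
  set w : ℕ → ℝ := Function.extend ν u 0 with hw
  have hu0 : ∀ j ∉ e.support.image Sigma.fst, u j = 0 := by
    intro j hj
    have hz : SS x id (fun _ => id) e j = 0 :=
      SS_apply_zero x id (fun _ => id) e j
        (fun s hs hh => hj (Finset.mem_image.2 ⟨s, hs, hh⟩))
    rw [hu]; simp only [hz]; exact (hqX j).q_zero
  have hv0 : ∀ m ∉ e.support.image (fun s : Σ k, ι k => ν s.1), v m = 0 := by
    intro m hm
    have hz : SS x ν em e m = 0 :=
      SS_apply_zero x ν em e m (fun s hs hh => hm (Finset.mem_image.2 ⟨s, hs, hh⟩))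
    rw [hv]; simp only [hz]; exact (hqX m).q_zero
  have hmu : memL u := memL_of_support hL u _ hu0
  have hmv : memL v := memL_of_support hL v _ hv0
  obtain ⟨hmw, hw1, hw2⟩ := hshift u hmu
  have hcoord : ∀ j, u j ≤ C * v (ν j) ∧ v (ν j) ≤ C * u j := by
    intro j
    have h1 : SS x id (fun _ => id) e j
        = ∑ i ∈ (e.comapDomain (Sigma.mk j) sigma_mk_injective.injOn).support,
            (e.comapDomain (Sigma.mk j) sigma_mk_injective.injOn) i • x j i :=
      SS_apply_eq x id Function.injective_id (fun _ => id) e j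
    have h2 : SS x ν em e (ν j)
        = ∑ i ∈ (e.comapDomain (Sigma.mk j) sigma_mk_injective.injOn).support,
            (e.comapDomain (Sigma.mk j) sigma_mk_injective.injOn) i • x (ν j) (em j i) :=
      SS_apply_eq x ν hν em e j
    have h3 := hem j (e.comapDomain (Sigma.mk j) sigma_mk_injective.injOn)
    rw [hu, hv]
    simp only [← h1, ← h2] at h3
    constructor
    · exact (inv_mul_le_iff₀ hC).mp h3.1
    · exact h3.2
  have hwv : ∀ j, w (ν j) = u j := fun j => hν.extend_apply u 0 j
  have hptv : ∀ m, |v m| ≤ |(C • w) m| := by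
    intro m
    by_cases hm : ∃ j, ν j = m
    · obtain ⟨j, rfl⟩ := hm
      have h0v : 0 ≤ v (ν j) := (hqX _).q_nonneg _
      have h0u : 0 ≤ u j := (hqX _).q_nonneg _
      rw [abs_of_nonneg h0v, Pi.smul_apply, smul_eq_mul, hwv j,
        abs_of_nonneg (mul_nonneg hC.le h0u)]
      exact (hcoord j).2
    · have hz : v m = 0 := by
        have : SS x ν em e m = 0 :=
          SS_apply_zero x ν em e m (fun s _ hh => hm ⟨s.1, hh⟩)
        rw [hv]; simp only [this]; exact (hqX m).q_zero
      have hzw : w m = 0 := by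
        rw [hw, Function.extend_apply' u (0 : ℕ → ℝ) m hm]; rfl
      simp [hz, hzw]
  have hptw : ∀ m, |w m| ≤ |(C • v) m| := by
    intro m
    by_cases hm : ∃ j, ν j = m
    · obtain ⟨j, rfl⟩ := hm
      have h0v : 0 ≤ v (ν j) := (hqX _).q_nonneg _
      have h0u : 0 ≤ u j := (hqX _).q_nonneg _
      rw [hwv j, abs_of_nonneg h0u, Pi.smul_apply, smul_eq_mul,
        abs_of_nonneg (mul_nonneg hC.le h0v)]
      exact (hcoord j).1
    · have hzw : w m = 0 := by
        rw [hw, Function.extend_apply' u (0 : ℕ → ℝ) m hm]; rfl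
      simp [hzw]; positivity
  constructor
  · show qL v ≤ (C * CS) * qL u
    calc qL v ≤ qL (C • w) := hL.q_mono hmv (hL.smul_mem C hmw) hptv
      _ = |C| * qL w := hL.q_smul _ _
      _ ≤ C * (CS * qL u) := by
          rw [abs_of_nonneg hC.le]
          exact mul_le_mul_of_nonneg_left hw2 hC.le
      _ = (C * CS) * qL u := by ring
  · show qL u ≤ (c⁻¹ * C) * qL v
    calc qL u ≤ c⁻¹ * qL w := by
          rw [le_inv_mul_iff₀ hc]
          exact hw1
      _ ≤ c⁻¹ * qL (C • v) :=
          mul_le_mul_of_nonneg_left (hL.q_mono hmw (hL.smul_mem C hmv) hptw)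
            (inv_nonneg.2 hc.le)
      _ = c⁻¹ * (|C| * qL v) := by rw [hL.q_smul]
      _ = (c⁻¹ * C) * qL v := by
          rw [abs_of_nonneg hC.le]; ring

theorem SS_add {x : ∀ j, ι j → 𝕏 j} (e1 e2 : (Σ j, ι j) →₀ ℝ) :
    SS x id (fun _ => id) (e1 + e2)
      = SS x id (fun _ => id) e1 + SS x id (fun _ => id) e2 := by
  unfold SS
  exact Finsupp.sum_add_index' (fun s => zero_smul ℝ _) (fun s r1 r2 => add_smul r1 r2 _)

end Aux2

theorem directSum_permutatively_equivalent_to_square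
    (memL : (ℕ → ℝ) → Prop) (qL : (ℕ → ℝ) → ℝ)
    (hL : IsSequenceSpace memL qL) (hsq : SquareStable memL qL)
    (𝕏 : ℕ → Type*) [∀ j, AddCommGroup (𝕏 j)] [∀ j, Module ℝ (𝕏 j)]
    (qX : ∀ j, 𝕏 j → ℝ)
    (C₀ : ℝ) (hC₀ : 1 ≤ C₀) (hqX : ∀ j, IsQuasiNormWith (qX j) C₀)
    (ι : ℕ → Type) [∀ j, Countable (ι j)]
    (x : ∀ j, ι j → 𝕏 j) (K : ℝ) (hbasis : ∀ j, IsKUncondBasis (qX j) (x j) K)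
    (C : ℝ) (hC : 0 < C)
    (hnested : ∀ j k : ℕ, j ≤ k → ∃ π : ι j → ι k, Function.Injective π ∧
      EquivalentFamilies (qX j) (qX k) (x j) (fun n => x k (π n)) C) :
    -- the direct sum basis `⊕_j X_j` of `(⊕_j 𝕏_j)_L` is permutatively equivalent
    -- to its square
    ∃ (π : (Σ j, ι j) ≃ (Fin 2 × Σ j, ι j)) (C' : ℝ), 0 < C' ∧
      EquivalentFamilies
        (fun f : ∀ j, 𝕏 j => qL (fun j => qX j (f j)))
        (fun F : Fin 2 → ∀ j, 𝕏 j => max (qL (fun j => qX j (F 0 j))) (qL (fun j => qX j (F 1 j))))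
        (fun s : Σ j, ι j => Pi.single s.1 (x s.1 s.2))
        (fun s => Pi.single (π s).1 (Pi.single (π s).2.1 (x (π s).2.1 (π s).2.2)))
        C' := by
  classical
  by_cases hemp : ∀ j, IsEmpty (ι j)
  · -- degenerate case: all index sets empty
    haveI hTempty : IsEmpty (Σ j, ι j) := ⟨fun s => (hemp s.1).false s.2⟩
    haveI : IsEmpty (Fin 2 × Σ j, ι j) := ⟨fun p => hTempty.false p.2⟩
    refine ⟨Equiv.equivOfIsEmpty _ _, 1, one_pos, fun a => ?_⟩
    have hsupp : a.support = ∅ := Finset.eq_empty_of_forall_notMem fun s _ => hTempty.false s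
    have h1 : (fun j => qX j ((0 : ∀ j, 𝕏 j) j)) = (0 : ℕ → ℝ) := by
      funext j; simp only [Pi.zero_apply]; exact (hqX j).q_zero
    have h2 : ∀ β : Fin 2, (fun j => qX j ((0 : Fin 2 → ∀ j, 𝕏 j) β j)) = (0 : ℕ → ℝ) := by
      intro β; funext j; simp only [Pi.zero_apply]; exact (hqX j).q_zero
    rw [hsupp]
    simp only [Finset.sum_empty]
    rw [h1, h2 0, h2 1, hL.qL_zero]
    norm_num
  · -- main case
    push_neg at hemp
    obtain ⟨j₀, hj₀⟩ := hemp
    obtain ⟨i₀⟩ := hj₀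
    obtain ⟨ρ, hρinj, hmf, hmt, c, CS, hc, hCS, hρbound⟩ := hsq
    obtain ⟨CL, hCL1, hCLb⟩ := hL.quasi_triangle
    -- basis vectors are nonzero
    have hxne : ∀ j (i : ι j), x j i ≠ 0 := by
      intro j i hzero
      obtain ⟨aa, -, hau⟩ := (hbasis j).1 0
      have hmem0 : UncondSum (qX j) (fun n => (0 : ι j → ℝ) n • x j n) 0 := by
        intro ε hε
        refine ⟨∅, fun G _ => ?_⟩
        have hz : (∑ n ∈ G, (0 : ι j → ℝ) n • x j n) - 0 = 0 := by simp
        rw [hz, (hqX j).q_zero]; exact hε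
      have hmem1 : UncondSum (qX j)
          (fun n => (Function.update (0 : ι j → ℝ) i 1) n • x j n) 0 := by
        intro ε hε
        refine ⟨∅, fun G _ => ?_⟩
        have hz : (∑ n ∈ G, (Function.update (0 : ι j → ℝ) i 1) n • x j n) - 0 = 0 := by
          rw [sub_zero]
          refine Finset.sum_eq_zero fun n _ => ?_
          by_cases hn : n = i
          · subst hn; rw [hzero, smul_zero]
          · rw [Function.update_of_ne hn]; simp
        rw [hz, (hqX j).q_zero]; exact hε
      have h01 := (hau _ hmem0).trans ((hau _ hmem1).symm)
      have := congrFun h01 i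
      simp [Function.update_self] at this
    -- K ≥ 1
    have hK1 : 1 ≤ K := by
      have hpos : 0 < qX j₀ (x j₀ i₀) := (hqX j₀).q_pos _ (hxne j₀ i₀)
      have hKK := (hbasis j₀).2 (Finsupp.single i₀ 1) (Finsupp.single i₀ 1) (fun n => le_refl _)
      rw [Finsupp.support_single_ne_zero i₀ one_ne_zero] at hKK
      simp only [Finset.sum_singleton, Finsupp.single_eq_same, one_smul] at hKK
      nlinarith
    have hK0 : 0 ≤ K := le_trans zero_le_one hK1
    -- choose the nested embeddings along the two branches of ρ
    have hle : ∀ (b : Bool) (j : ℕ), j ≤ ρ (b, j) := by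
      intro b j
      cases b
      · exact hmf.le_apply
      · exact hmt.le_apply
    choose em hem_inj hem_eq using fun (b : Bool) (j : ℕ) => hnested j (ρ (b, j)) (hle b j)
    set τ : Bool → ℕ → ℕ := fun b j => ρ (b, j) with hτ
    have hτinj : ∀ b, Function.Injective (τ b) :=
      fun b j1 j2 hj => congrArg Prod.snd (hρinj hj)
    -- shift estimates from square-stability
    have hshift : ∀ (b : Bool) (u : ℕ → ℝ), memL u →
        memL (Function.extend (τ b) u 0) ∧
        c * qL u ≤ qL (Function.extend (τ b) u 0) ∧
        qL (Function.extend (τ b) u 0) ≤ CS * qL u := by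
      intro b u hu
      have h0 : memL (0 : ℕ → ℝ) := hL.zero_mem
      have hq0 : qL 0 = 0 := hL.qL_zero
      have hmaxu : max (qL (0 : ℕ → ℝ)) (qL u) = qL u := by
        rw [hq0]; exact max_eq_right (hL.q_nonneg u)
      have hmaxu' : max (qL u) (qL (0 : ℕ → ℝ)) = qL u := by
        rw [hq0]; exact max_eq_left (hL.q_nonneg u)
      cases b
      · -- false: extend (τ false) u 0 = interleave ρ 0 u
        have heq : Function.extend (τ false) u 0 = interleave ρ (0 : ℕ → ℝ) u := by
          funext m
          by_cases hm : ∃ p : Bool × ℕ, ρ p = m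
          · obtain ⟨⟨b', n⟩, rfl⟩ := hm
            rw [interleave, hρinj.extend_apply]
            cases b'
            · rw [show ρ (false, n) = τ false n from rfl,
                Function.Injective.extend_apply (hτinj false)]
              simp
            · rw [Function.extend_apply' u (0 : ℕ → ℝ) _ (by
                rintro ⟨k, hk⟩
                have : (false, k) = (true, n) := hρinj hk
                simp at this)]
              rfl
          · rw [Function.extend_apply' u (0 : ℕ → ℝ) m (by
                rintro ⟨k, hk⟩; exact hm ⟨(false, k), hk⟩),
              interleave, Function.extend_apply' _ (0 : ℕ → ℝ) m hm]
        obtain ⟨hm1, hm2, hm3⟩ := hρbound 0 u h0 hu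
        rw [hmaxu] at hm2 hm3
        rw [heq]
        exact ⟨hm1, hm2, hm3⟩
      · -- true: extend (τ true) u 0 = interleave ρ u 0
        have heq : Function.extend (τ true) u 0 = interleave ρ u (0 : ℕ → ℝ) := by
          funext m
          by_cases hm : ∃ p : Bool × ℕ, ρ p = m
          · obtain ⟨⟨b', n⟩, rfl⟩ := hm
            rw [interleave, hρinj.extend_apply]
            cases b'
            · rw [Function.extend_apply' u (0 : ℕ → ℝ) _ (by
                rintro ⟨k, hk⟩
                have : (true, k) = (false, n) := hρinj hk
                simp at this)]
              rfl
            · rw [show ρ (true, n) = τ true n from rfl,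
                Function.Injective.extend_apply (hτinj true)]
              simp
          · rw [Function.extend_apply' u (0 : ℕ → ℝ) m (by
                rintro ⟨k, hk⟩; exact hm ⟨(true, k), hk⟩),
              interleave, Function.extend_apply' _ (0 : ℕ → ℝ) m hm]
        obtain ⟨hm1, hm2, hm3⟩ := hρbound u 0 hu h0
        rw [hmaxu'] at hm2 hm3
        rw [heq]
        exact ⟨hm1, hm2, hm3⟩
    -- branch equivalences
    have hbranch : ∀ (b : Bool) (e : (Σ j, ι j) →₀ ℝ),
        qB qL qX (SS x (τ b) (em b) e) ≤ (C * CS) * qB qL qX (SS x id (fun _ => id) e) ∧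
        qB qL qX (SS x id (fun _ => id) e) ≤ (c⁻¹ * C) * qB qL qX (SS x (τ b) (em b) e) :=
      fun b e => SS_shift_equiv hL hqX hC hc (τ b) (hτinj b) (em b) (hem_eq b) (hshift b) e
    -- the injections of the square into the sum
    set σb : Bool → (Σ j, ι j) → (Σ j, ι j) := fun b s => ⟨τ b s.1, em b s.1 s.2⟩ with hσb
    have hσinj : ∀ b, Function.Injective (σb b) := by
      intro b s1 s2 hs
      obtain ⟨m1, i1⟩ := s1; obtain ⟨m2, i2⟩ := s2
      have h1 : τ b m1 = τ b m2 := congrArg Sigma.fst hs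
      have hm : m1 = m2 := hτinj b h1
      subst hm
      have h2 : em b m1 i1 = em b m1 i2 := by
        have h3 := (Sigma.mk.inj_iff.mp hs).2
        exact eq_of_heq h3
      rw [hem_inj b m1 h2]
    set tb : Fin 2 → Bool := fun β => decide (β = 1) with htb
    have htbinj : Function.Injective tb := by decide
    set σF : (Fin 2 × Σ j, ι j) → Σ j, ι j := fun p => σb (tb p.1) p.2 with hσF
    have hσFinj : Function.Injective σF := by
      intro p1 p2 hp
      obtain ⟨β1, s1⟩ := p1; obtain ⟨β2, s2⟩ := p2
      have h1 : ρ (tb β1, s1.1) = ρ (tb β2, s2.1) := congrArg Sigma.fst hp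
      have h2 := hρinj h1
      have hb : tb β1 = tb β2 := congrArg Prod.fst h2
      have hβ : β1 = β2 := htbinj hb
      subst hβ
      have h3 : σb (tb β1) s1 = σb (tb β1) s2 := hp
      rw [hσinj _ h3]
    -- structured Cantor–Schröder–Bernstein bijection
    haveI : Nonempty (Σ j, ι j) := ⟨⟨j₀, i₀⟩⟩
    obtain ⟨h, hP⟩ := csb_struct' (fun s : Σ j, ι j => ((0 : Fin 2), s)) σF
      (fun s1 s2 hs => congrArg Prod.snd hs) hσFinj
    -- constants
    set Cq : ℝ := C₀ * CL with hCqdef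
    have hCq1 : 1 ≤ Cq := by rw [hCqdef]; nlinarith
    have hCq0 : 0 ≤ Cq := le_trans zero_le_one hCq1
    have hCqpos : 0 < Cq := lt_of_lt_of_le one_pos hCq1
    have hKpos : 0 < K := lt_of_lt_of_le one_pos hK1
    set M1 : ℝ := C * CS with hM1def
    set M2 : ℝ := c⁻¹ * C with hM2def
    have hM1 : 0 < M1 := mul_pos hC hCS
    have hM2 : 0 < M2 := mul_pos (inv_pos.2 hc) hC
    set Mup : ℝ := Cq * (K + M2 * K) with hMupdef
    set Mlow : ℝ := Cq * Cq * (K + M1 * K + M1 * K) with hMlowdef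
    have hMup : 0 < Mup := mul_pos hCqpos (by nlinarith [mul_pos hM2 hKpos])
    have hMlow : 0 < Mlow := mul_pos (mul_pos hCqpos hCqpos)
      (by nlinarith [mul_pos hM1 hKpos])
    set C' : ℝ := Mup + Mlow with hC'def
    have hC' : 0 < C' := add_pos hMup hMlow
    refine ⟨h, C', hC', ?_⟩
    intro a
    -- the two coefficient families of the image
    set a' : (Fin 2 × Σ j, ι j) →₀ ℝ := a.embDomain h.toEmbedding with ha'def
    have ha'app : ∀ p, a' p = a (h.symm p) := by
      intro p
      rw [ha'def]
      conv_lhs => rw [show p = h.toEmbedding (h.symm p) from (h.apply_symm_apply p).symm]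
      rw [Finsupp.embDomain_apply_self]
    have hmkinj : ∀ β : Fin 2,
        Function.Injective (Prod.mk β : (Σ j, ι j) → Fin 2 × Σ j, ι j) :=
      fun β t1 t2 ht => congrArg Prod.snd ht
    set d : Fin 2 → ((Σ j, ι j) →₀ ℝ) :=
      fun β => a'.comapDomain (Prod.mk β) (hmkinj β).injOn with hddef
    have hdapp : ∀ β t, d β t = a (h.symm (β, t)) := fun β t => ha'app (β, t)
    have hVe : ∀ β : Fin 2,
        (∑ n ∈ a.support, a n •
          (Pi.single (h n).1 (Pi.single (h n).2.1 (x (h n).2.1 (h n).2.2))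
            : Fin 2 → ∀ j, 𝕏 j)) β
        = SS x id (fun _ => id) (d β) := by
      intro β
      rw [Finset.sum_apply]
      have step1 : ∀ n ∈ a.support,
          (a n • (Pi.single (h n).1 (Pi.single (h n).2.1 (x (h n).2.1 (h n).2.2))
            : Fin 2 → ∀ j, 𝕏 j)) β
          = a n • (if (h n).1 = β
              then (Pi.single (h n).2.1 (x (h n).2.1 (h n).2.2) : ∀ j, 𝕏 j) else 0) := by
        intro n _
        rw [Pi.smul_apply]
        congr 1
        by_cases hb : (h n).1 = β
        · subst hb; rw [if_pos rfl, Pi.single_eq_same]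
        · rw [if_neg hb, Pi.single_eq_of_ne (Ne.symm hb)]
      rw [Finset.sum_congr rfl step1]
      have step2 : (∑ n ∈ a.support, a n • (if (h n).1 = β
            then (Pi.single (h n).2.1 (x (h n).2.1 (h n).2.2) : ∀ j, 𝕏 j) else 0))
          = ∑ p ∈ a'.support, a' p • (if p.1 = β
              then (Pi.single p.2.1 (x p.2.1 p.2.2) : ∀ j, 𝕏 j) else 0) := by
        rw [ha'def]
        exact (Finsupp.sum_embDomain (f := h.toEmbedding) (v := a)
          (g := fun p (r : ℝ) => r • (if p.1 = β
            then (Pi.single p.2.1 (x p.2.1 p.2.2) : ∀ j, 𝕏 j) else 0))).symm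
      rw [step2]
      have hvan : ∀ p ∈ a'.support, p ∉ Set.range (Prod.mk β : (Σ j, ι j) → _) →
          a' p • (if p.1 = β
            then (Pi.single p.2.1 (x p.2.1 p.2.2) : ∀ j, 𝕏 j) else 0) = 0 := by
        intro p _ hpr
        have hne : p.1 ≠ β := by
          intro hh
          exact hpr ⟨p.2, by rw [← hh]⟩
        rw [if_neg hne, smul_zero]
      have step3 := Finset.sum_preimage (Prod.mk β) a'.support (hmkinj β).injOn
        (fun p => a' p • (if p.1 = β
          then (Pi.single p.2.1 (x p.2.1 p.2.2) : ∀ j, 𝕏 j) else 0)) hvan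
      rw [← step3, SS, Finsupp.sum]
      refine Finset.sum_congr rfl fun t _ => ?_
      simp [hddef, id]
    have hq_nonneg_B : ∀ f : ∀ j, 𝕏 j, 0 ≤ qB qL qX f := fun f => hL.q_nonneg _
    -- when the inverse of the bijection at (β, t) is not t itself, it comes from σF
    -- KEY 1 : each component of the image is dominated by the original element
    have hKEY1 : ∀ β : Fin 2,
        qB qL qX (SS x id (fun _ => id) (d β))
          ≤ Mup * qB qL qX (SS x id (fun _ => id) a) := by
      intro β
      set P : (Σ j, ι j) → Prop := fun t => h.symm (β, t) = t with hPdef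
      set fil : (Σ j, ι j) →₀ ℝ := (d β).filter P with hfildef
      set rest : (Σ j, ι j) →₀ ℝ := (d β).filter (fun t => ¬ P t) with hrestdef
      have hsplit : fil + rest = d β := Finsupp.filter_pos_add_filter_neg (d β) P
      have hSsplit : SS x id (fun _ => id) (d β)
          = SS x id (fun _ => id) fil + SS x id (fun _ => id) rest := by
        conv_lhs => rw [← hsplit]
        exact SS_add fil rest
      have hfil_le : ∀ t, |fil t| ≤ |a t| := by
        intro t
        rw [hfildef, Finsupp.filter_apply]
        by_cases hPt : P t
        · rw [if_pos hPt, hdapp β t, hPt]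
        · rw [if_neg hPt]; simp
      have hrest_eq : ∀ t, ¬ P t → rest t = a (σb (tb β) t) := by
        intro t hPt
        rw [hrestdef, Finsupp.filter_apply, if_pos hPt, hdapp β t]
        congr 1
        rcases hP (h.symm (β, t)) with hcase | hcase
        · exfalso
          rw [Equiv.apply_symm_apply] at hcase
          exact hPt (congrArg Prod.snd hcase).symm
        · rw [Equiv.apply_symm_apply] at hcase
          exact hcase.symm
      have hrest_zero : ∀ t, P t → rest t = 0 := by
        intro t hPt
        rw [hrestdef, Finsupp.filter_apply, if_neg (not_not_intro hPt)]
      set grest : (Σ j, ι j) →₀ ℝ :=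
        Finsupp.embDomain ⟨σb (tb β), hσinj (tb β)⟩ rest with hgrestdef
      have hgrest_le : ∀ s, |grest s| ≤ |a s| := by
        intro s
        by_cases hs : ∃ t, σb (tb β) t = s
        · obtain ⟨t, rfl⟩ := hs
          have happ : grest (σb (tb β) t) = rest t := by
            rw [hgrestdef]
            exact Finsupp.embDomain_apply_self ⟨σb (tb β), hσinj (tb β)⟩ rest t
          rw [happ]
          by_cases hPt : P t
          · rw [hrest_zero t hPt]; simp
          · rw [hrest_eq t hPt]
        · have hz : grest s = 0 := by
            rw [hgrestdef]
            exact Finsupp.embDomain_notin_range _ _ s (by simpa using hs)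
          rw [hz]; simp
      have hSrest : SS x id (fun _ => id) grest = SS x (τ (tb β)) (em (tb β)) rest := by
        rw [hgrestdef, SS]
        exact Finsupp.sum_embDomain (f := ⟨σb (tb β), hσinj (tb β)⟩) (v := rest)
          (g := fun s (r : ℝ) => r • Pi.single (id s.1) (x (id s.1) (id s.2)))
      have e1 : qB qL qX (SS x id (fun _ => id) fil)
          ≤ K * qB qL qX (SS x id (fun _ => id) a) :=
        qB_uncond hL hqX hbasis hK0 a fil hfil_le
      have e2 : qB qL qX (SS x id (fun _ => id) grest)
          ≤ K * qB qL qX (SS x id (fun _ => id) a) :=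
        qB_uncond hL hqX hbasis hK0 a grest hgrest_le
      have e3 : qB qL qX (SS x id (fun _ => id) rest)
          ≤ M2 * (K * qB qL qX (SS x id (fun _ => id) a)) := by
        refine le_trans ((hbranch (tb β) rest).2) ?_
        calc M2 * qB qL qX (SS x (τ (tb β)) (em (tb β)) rest)
            = M2 * qB qL qX (SS x id (fun _ => id) grest) := by rw [hSrest]
          _ ≤ M2 * (K * qB qL qX (SS x id (fun _ => id) a)) :=
              mul_le_mul_of_nonneg_left e2 hM2.le
      have hvanfil : ∀ j ∉ (d β).support.image Sigma.fst,
          SS x id (fun _ => id) fil j = 0 := by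
        intro j hj
        refine SS_apply_zero x id (fun _ => id) fil j fun s hs hh => ?_
        apply hj
        refine Finset.mem_image.2 ⟨s, ?_, hh⟩
        rw [hfildef, Finsupp.support_filter] at hs
        exact Finset.mem_of_mem_filter s hs
      have hvanrest : ∀ j ∉ (d β).support.image Sigma.fst,
          SS x id (fun _ => id) rest j = 0 := by
        intro j hj
        refine SS_apply_zero x id (fun _ => id) rest j fun s hs hh => ?_
        apply hj
        refine Finset.mem_image.2 ⟨s, ?_, hh⟩
        rw [hrestdef, Finsupp.support_filter] at hs
        exact Finset.mem_of_mem_filter s hs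
      have hQT := qB_add_le hL hqX (le_trans zero_le_one hC₀) hCLb
        (SS x id (fun _ => id) fil) (SS x id (fun _ => id) rest)
        ((d β).support.image Sigma.fst) hvanfil hvanrest
      rw [hSsplit]
      calc qB qL qX (SS x id (fun _ => id) fil + SS x id (fun _ => id) rest)
          ≤ Cq * (qB qL qX (SS x id (fun _ => id) fil)
              + qB qL qX (SS x id (fun _ => id) rest)) := hQT
        _ ≤ Cq * (K * qB qL qX (SS x id (fun _ => id) a)
              + M2 * (K * qB qL qX (SS x id (fun _ => id) a))) :=
            mul_le_mul_of_nonneg_left (add_le_add e1 e3) hCq0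
        _ = Mup * qB qL qX (SS x id (fun _ => id) a) := by rw [hMupdef]; ring
    -- KEY 2 : the original element is dominated by the max of the two components
    have hKEY2 : qB qL qX (SS x id (fun _ => id) a)
        ≤ Mlow * max (qB qL qX (SS x id (fun _ => id) (d 0)))
            (qB qL qX (SS x id (fun _ => id) (d 1))) := by
      set Pid : (Σ j, ι j) → Prop := fun s => h s = ((0 : Fin 2), s) with hPiddef
      set aid : (Σ j, ι j) →₀ ℝ := a.filter Pid with haiddef
      set aσ : Fin 2 → ((Σ j, ι j) →₀ ℝ) :=
        fun β => a.filter (fun s => ¬ Pid s ∧ (h s).1 = β) with haσdef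
      have hfin2 : ∀ γ : Fin 2, γ = 0 ∨ γ = 1 := by decide
      have hsplita : a = aid + (aσ 0 + aσ 1) := by
        ext s
        simp only [Finsupp.add_apply, haiddef, haσdef, Finsupp.filter_apply]
        by_cases h1 : Pid s
        · have h2 : (h s).1 = 0 := by
            rw [hPiddef] at h1; rw [h1]
          rw [if_pos h1, if_neg (fun hx : ¬ Pid s ∧ (h s).1 = 0 => hx.1 h1),
            if_neg (fun hx : ¬ Pid s ∧ (h s).1 = 1 => hx.1 h1)]
          ring
        · rcases hfin2 (h s).1 with h2 | h2
          · rw [if_neg h1, if_pos (⟨h1, h2⟩ : ¬ Pid s ∧ (h s).1 = 0),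
              if_neg (fun hx : ¬ Pid s ∧ (h s).1 = 1 => by
                rw [h2] at hx; exact absurd hx.2 (by decide))]
            ring
          · rw [if_neg h1,
              if_neg (fun hx : ¬ Pid s ∧ (h s).1 = 0 => by
                rw [h2] at hx; exact absurd hx.2 (by decide)),
              if_pos (⟨h1, h2⟩ : ¬ Pid s ∧ (h s).1 = 1)]
            ring
      have hSsplita : SS x id (fun _ => id) a
          = SS x id (fun _ => id) aid
            + (SS x id (fun _ => id) (aσ 0) + SS x id (fun _ => id) (aσ 1)) := by
        conv_lhs => rw [hsplita]
        rw [SS_add, SS_add]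
      have hsub_id : aid.support ⊆ a.support := by
        rw [haiddef, Finsupp.support_filter]; exact Finset.filter_subset _ _
      have hsub_σ : ∀ β, (aσ β).support ⊆ a.support := by
        intro β
        simp only [haσdef, Finsupp.support_filter]
        exact Finset.filter_subset _ _
      have hvan : ∀ (e : (Σ j, ι j) →₀ ℝ), e.support ⊆ a.support →
          ∀ j ∉ a.support.image Sigma.fst, SS x id (fun _ => id) e j = 0 := by
        intro e hsub j hj
        refine SS_apply_zero x id (fun _ => id) e j fun s hs hh => ?_
        exact hj (Finset.mem_image.2 ⟨s, hsub hs, hh⟩)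
      have hvansum : ∀ j ∉ a.support.image Sigma.fst,
          (SS x id (fun _ => id) (aσ 0) + SS x id (fun _ => id) (aσ 1)) j = 0 := by
        intro j hj
        rw [Pi.add_apply, hvan (aσ 0) (hsub_σ 0) j hj, hvan (aσ 1) (hsub_σ 1) j hj, add_zero]
      have hQT1 := qB_add_le hL hqX (le_trans zero_le_one hC₀) hCLb
        (SS x id (fun _ => id) aid)
        (SS x id (fun _ => id) (aσ 0) + SS x id (fun _ => id) (aσ 1))
        (a.support.image Sigma.fst) (hvan aid hsub_id) hvansum
      have hQT2 := qB_add_le hL hqX (le_trans zero_le_one hC₀) hCLb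
        (SS x id (fun _ => id) (aσ 0)) (SS x id (fun _ => id) (aσ 1))
        (a.support.image Sigma.fst) (hvan (aσ 0) (hsub_σ 0)) (hvan (aσ 1) (hsub_σ 1))
      have haid_le : ∀ s, |aid s| ≤ |d 0 s| := by
        intro s
        rw [haiddef, Finsupp.filter_apply]
        by_cases h1 : Pid s
        · have hsymm : h.symm ((0 : Fin 2), s) = s := by
            rw [hPiddef] at h1
            rw [← h1, Equiv.symm_apply_apply]
          rw [if_pos h1, hdapp 0 s, hsymm]
        · rw [if_neg h1]; simp
      have eid : qB qL qX (SS x id (fun _ => id) aid)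
          ≤ K * qB qL qX (SS x id (fun _ => id) (d 0)) :=
        qB_uncond hL hqX hbasis hK0 (d 0) aid haid_le
      have eσ : ∀ β : Fin 2, qB qL qX (SS x id (fun _ => id) (aσ β))
          ≤ M1 * (K * qB qL qX (SS x id (fun _ => id) (d β))) := by
        intro β
        set e' : (Σ j, ι j) →₀ ℝ :=
          (aσ β).comapDomain (σb (tb β)) (hσinj (tb β)).injOn with he'def
        have hcondition : ∀ s, (aσ β) s ≠ 0 → ¬ Pid s ∧ (h s).1 = β := by
          intro s hs
          by_contra hcc
          apply hs
          simp only [haσdef, Finsupp.filter_apply]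
          rw [if_neg hcc]
        have hfromσ : ∀ s, ¬ Pid s → (h s).1 = β → σb (tb β) (h s).2 = s := by
          intro s h1 h2
          have hσs : σF (h s) = s := by
            rcases hP s with hcase | hcase
            · exact absurd hcase h1
            · exact hcase
          have h5 : σF (h s) = σb (tb (h s).1) (h s).2 := rfl
          rw [← h2, ← h5, hσs]
        have hemb : Finsupp.embDomain ⟨σb (tb β), hσinj (tb β)⟩ e' = aσ β := by
          ext s
          by_cases hs : ∃ t, σb (tb β) t = s
          · obtain ⟨t, rfl⟩ := hs
            exact Finsupp.embDomain_apply_self ⟨σb (tb β), hσinj (tb β)⟩ e' t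
          · rw [Finsupp.embDomain_notin_range _ _ s (by simpa using hs)]
            by_contra hne
            have hcond := hcondition s (Ne.symm hne)
            exact hs ⟨(h s).2, hfromσ s hcond.1 hcond.2⟩
        have hSaσ : SS x id (fun _ => id) (aσ β) = SS x (τ (tb β)) (em (tb β)) e' := by
          conv_lhs => rw [← hemb]
          rw [SS]
          exact Finsupp.sum_embDomain (f := ⟨σb (tb β), hσinj (tb β)⟩) (v := e')
            (g := fun s (r : ℝ) => r • Pi.single (id s.1) (x (id s.1) (id s.2)))
        have he'_le : ∀ t, |e' t| ≤ |d β t| := by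
          intro t
          by_cases hz : (aσ β) (σb (tb β) t) = 0
          · rw [he'def, Finsupp.comapDomain_apply, hz]; simp
          · have hval : e' t = aσ β (σb (tb β) t) := rfl
            have hcond := hcondition _ hz
            have hts : σb (tb β) (h (σb (tb β) t)).2 = σb (tb β) t :=
              hfromσ _ hcond.1 hcond.2
            have ht2 : (h (σb (tb β) t)).2 = t := hσinj (tb β) hts
            have hhs : h (σb (tb β) t) = (β, t) := Prod.ext hcond.2 ht2
            have hsymm : h.symm (β, t) = σb (tb β) t := by
              rw [← hhs, Equiv.symm_apply_apply]
            have hvala : aσ β (σb (tb β) t) = a (σb (tb β) t) := by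
              simp only [haσdef, Finsupp.filter_apply]
              rw [if_pos hcond]
            rw [hval, hvala, hdapp β t, hsymm]
        have e2' : qB qL qX (SS x id (fun _ => id) e')
            ≤ K * qB qL qX (SS x id (fun _ => id) (d β)) :=
          qB_uncond hL hqX hbasis hK0 (d β) e' he'_le
        calc qB qL qX (SS x id (fun _ => id) (aσ β))
            = qB qL qX (SS x (τ (tb β)) (em (tb β)) e') := by rw [hSaσ]
          _ ≤ M1 * qB qL qX (SS x id (fun _ => id) e') := (hbranch (tb β) e').1
          _ ≤ M1 * (K * qB qL qX (SS x id (fun _ => id) (d β))) :=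
              mul_le_mul_of_nonneg_left e2' hM1.le
      set Mx : ℝ := max (qB qL qX (SS x id (fun _ => id) (d 0)))
          (qB qL qX (SS x id (fun _ => id) (d 1))) with hMxdef
      have hMx0 : 0 ≤ Mx := le_trans (hq_nonneg_B _) (le_max_left _ _)
      have A1 : qB qL qX (SS x id (fun _ => id) aid) ≤ K * Mx :=
        le_trans eid (mul_le_mul_of_nonneg_left (le_max_left _ _) hK0)
      have A2 : qB qL qX (SS x id (fun _ => id) (aσ 0)) ≤ M1 * (K * Mx) :=
        le_trans (eσ 0) (mul_le_mul_of_nonneg_left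
          (mul_le_mul_of_nonneg_left (le_max_left _ _) hK0) hM1.le)
      have A3 : qB qL qX (SS x id (fun _ => id) (aσ 1)) ≤ M1 * (K * Mx) :=
        le_trans (eσ 1) (mul_le_mul_of_nonneg_left
          (mul_le_mul_of_nonneg_left (le_max_right _ _) hK0) hM1.le)
      rw [hSsplita]
      calc qB qL qX (SS x id (fun _ => id) aid
            + (SS x id (fun _ => id) (aσ 0) + SS x id (fun _ => id) (aσ 1)))
          ≤ Cq * (qB qL qX (SS x id (fun _ => id) aid)
              + qB qL qX (SS x id (fun _ => id) (aσ 0) + SS x id (fun _ => id) (aσ 1))) := hQT1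
        _ ≤ Cq * (qB qL qX (SS x id (fun _ => id) aid)
              + Cq * (qB qL qX (SS x id (fun _ => id) (aσ 0))
                + qB qL qX (SS x id (fun _ => id) (aσ 1)))) :=
            mul_le_mul_of_nonneg_left (add_le_add_right hQT2 _) hCq0
        _ ≤ Cq * (Cq * (K * Mx) + Cq * (M1 * (K * Mx) + M1 * (K * Mx))) := by
            refine mul_le_mul_of_nonneg_left (add_le_add ?_ ?_) hCq0
            · exact le_trans A1 (le_mul_of_one_le_left (mul_nonneg hK0 hMx0) hCq1)
            · exact mul_le_mul_of_nonneg_left (add_le_add A2 A3) hCq0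
        _ = Mlow * Mx := by rw [hMlowdef]; ring
    -- final assembly
    have hSa : (∑ n ∈ a.support, a n • Pi.single n.1 (x n.1 n.2) : ∀ j, 𝕏 j)
        = SS x id (fun _ => id) a := rfl
    constructor
    · show C'⁻¹ * qL (fun j => qX j
          ((∑ n ∈ a.support, a n • Pi.single n.1 (x n.1 n.2)) j))
        ≤ max (qL (fun j => qX j ((∑ n ∈ a.support, a n •
              (Pi.single (h n).1 (Pi.single (h n).2.1 (x (h n).2.1 (h n).2.2))
                : Fin 2 → ∀ j, 𝕏 j)) 0 j)))
            (qL (fun j => qX j ((∑ n ∈ a.support, a n •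
              (Pi.single (h n).1 (Pi.single (h n).2.1 (x (h n).2.1 (h n).2.2))
                : Fin 2 → ∀ j, 𝕏 j)) 1 j)))
      simp only [hSa, hVe]
      have hMx0 : (0:ℝ) ≤ max (qB qL qX (SS x id (fun _ => id) (d 0)))
          (qB qL qX (SS x id (fun _ => id) (d 1))) :=
        le_trans (hq_nonneg_B _) (le_max_left _ _)
      have hstep : qB qL qX (SS x id (fun _ => id) a)
          ≤ C' * max (qB qL qX (SS x id (fun _ => id) (d 0)))
              (qB qL qX (SS x id (fun _ => id) (d 1))) :=
        le_trans hKEY2 (mul_le_mul_of_nonneg_right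
          (by rw [hC'def]; exact le_add_of_nonneg_left hMup.le) hMx0)
      exact (inv_mul_le_iff₀ hC').2 hstep
    · show max (qL (fun j => qX j ((∑ n ∈ a.support, a n •
              (Pi.single (h n).1 (Pi.single (h n).2.1 (x (h n).2.1 (h n).2.2))
                : Fin 2 → ∀ j, 𝕏 j)) 0 j)))
            (qL (fun j => qX j ((∑ n ∈ a.support, a n •
              (Pi.single (h n).1 (Pi.single (h n).2.1 (x (h n).2.1 (h n).2.2))
                : Fin 2 → ∀ j, 𝕏 j)) 1 j)))
        ≤ C' * qL (fun j => qX j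
            ((∑ n ∈ a.support, a n • Pi.single n.1 (x n.1 n.2)) j))
      simp only [hSa, hVe]
      have hMC : Mup ≤ C' := by rw [hC'def]; exact le_add_of_nonneg_right hMlow.le
      refine max_le ?_ ?_
      · exact le_trans (hKEY1 0) (mul_le_mul_of_nonneg_right hMC (hq_nonneg_B _))
      · exact le_trans (hKEY1 1) (mul_le_mul_of_nonneg_right hMC (hq_nonneg_B _))

end
end
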